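/- arXiv:0902.2520 — 6 statements merged into one kernel-verified Lean document; each statement's English description precedes it below -/
import Mathlib

section
/- For all real x > 0, ψ(x+1) - log x < 1/(2x), where ψ is the digamma function. -/
open Real Filter

/-- The digamma function ψ(x) = Γ′(x)/Γ(x). -/
noncomputable def digamma (x : ℝ) : ℝ := deriv Real.Gamma x / Real.Gamma x

open Set in
private lemma diffGamma {y : ℝ} (hy : 0 < y) : DifferentiableAt ℝ Real.Gamma y :=
  Real.differentiableAt_Gamma fun m => by
    have : (0:ℝ) ≤ m := m.cast_nonneg
    intro h; rw [h] at hy; linarith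

open Set in
private lemma deriv_logGamma {y : ℝ} (hy : 0 < y) :
    deriv (Real.log ∘ Real.Gamma) y = digamma y := by
  rw [Function.comp_def, deriv.log (diffGamma hy) (Real.Gamma_pos_of_pos hy).ne']
  rfl

open Set in
private lemma diff_logGamma {y : ℝ} (hy : 0 < y) :
    DifferentiableAt ℝ (Real.log ∘ Real.Gamma) y :=
  (diffGamma hy).log (Real.Gamma_pos_of_pos hy).ne'

open Set in
private lemma digamma_le_log {y : ℝ} (hy : 0 < y) : digamma y ≤ Real.log y := by
  have hc : ConvexOn ℝ (Ioi 0) (Real.log ∘ Real.Gamma) := Real.convexOn_log_Gamma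
  have h := hc.deriv_le_slope (mem_Ioi.mpr hy) (mem_Ioi.mpr (by linarith : (0:ℝ) < y + 1))
    (by linarith) (diff_logGamma hy)
  rw [deriv_logGamma hy] at h
  refine h.trans (le_of_eq ?_)
  rw [slope_def_field, Function.comp_apply, Function.comp_apply,
    Real.Gamma_add_one hy.ne', Real.log_mul hy.ne' (Real.Gamma_pos_of_pos hy).ne']
  field_simp
  ring

open Set in
private lemma digamma_add_one {y : ℝ} (hy : 0 < y) :
    digamma (y + 1) = digamma y + 1 / y := by
  have h_rec : ∀ x ∈ Ioi (0:ℝ), (Real.log ∘ Real.Gamma) (x + 1)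
      = (Real.log ∘ Real.Gamma) x + Real.log x := by
    intro x hx
    simp only [Function.comp_apply, Real.Gamma_add_one (ne_of_gt hx),
      Real.log_mul (ne_of_gt hx) (Real.Gamma_pos_of_pos hx).ne', add_comm]
  have : deriv (Real.log ∘ Real.Gamma) (y + 1)
      = deriv (Real.log ∘ Real.Gamma) y + 1 / y := by
    rw [← deriv_comp_add_const, one_div, ← Real.deriv_log,
      ← deriv_add (diff_logGamma hy) (Real.differentiableAt_log hy.ne')]
    apply Filter.EventuallyEq.deriv_eq
    filter_upwards [eventually_gt_nhds hy] with t ht using h_rec t ht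
  rw [← deriv_logGamma (by linarith : (0:ℝ) < y + 1), ← deriv_logGamma hy, this]

/-- Strict trapezoid inequality for `1/t`. -/
private lemma log_trapezoid {t : ℝ} (ht : 0 < t) :
    Real.log (t + 1) - Real.log t < 1 / (2 * t) + 1 / (2 * (t + 1)) := by
  set g : ℝ → ℝ := fun u => (u + 1) / 2 - 1 / (2 * (u + 1)) - Real.log (1 + u) with hg
  have hder : ∀ u : ℝ, 0 ≤ u → HasDerivAt g
      (1 / 2 - (-2 / (2 * (u + 1)) ^ 2) - 1 / (1 + u)) u := by
    intro u hu
    have hu1 : (0:ℝ) < 1 + u := by linarith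
    have h1 : HasDerivAt (fun u : ℝ => (u + 1) / 2) (1 / 2) u := by
      simpa using ((hasDerivAt_id u).add_const 1).div_const 2
    have h2 : HasDerivAt (fun u : ℝ => 1 / (2 * (u + 1)))
        (-2 / (2 * (u + 1)) ^ 2) u := by
      have : HasDerivAt (fun u : ℝ => 2 * (u + 1)) 2 u := by
        simpa using ((hasDerivAt_id u).add_const 1).const_mul 2
      simpa only [one_div, Pi.inv_def] using this.inv (by positivity)
    have h3 : HasDerivAt (fun u : ℝ => Real.log (1 + u)) (1 / (1 + u)) u := by
      simpa using ((hasDerivAt_id u).const_add 1).log hu1.ne'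
    exact (h1.sub h2).sub h3
  have hmono : StrictMonoOn g (Set.Ici 0) := by
    apply strictMonoOn_of_deriv_pos (convex_Ici 0)
    · intro u hu
      exact ((hder u hu).differentiableAt).continuousAt.continuousWithinAt
    · intro u hu
      rw [interior_Ici] at hu
      have hu' : (0:ℝ) < u := hu
      rw [(hder u hu'.le).deriv]
      have h1 : (0:ℝ) < 1 + u := by linarith
      rw [show (1:ℝ) / 2 - (-2 / (2 * (u + 1)) ^ 2) - 1 / (1 + u)
          = u ^ 2 / (2 * (u + 1) ^ 2) by field_simp; ring]
      positivity
  have hgpos : 0 < g (1 / t) := by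
    have h0 : g 0 = 0 := by simp [hg]
    have := hmono (Set.mem_Ici.mpr le_rfl) (Set.mem_Ici.mpr (by positivity : (0:ℝ) ≤ 1 / t))
      (by positivity)
    rwa [h0] at this
  have ht1 : (0:ℝ) < t + 1 := by linarith
  have key : (1 / t + 1) / 2 - 1 / (2 * (1 / t + 1)) = 1 / (2 * t) + 1 / (2 * (t + 1)) := by
    rw [div_add' _ _ _ ht.ne']
    field_simp
    ring
  have hlog : Real.log (1 + 1 / t) = Real.log (t + 1) - Real.log t := by
    rw [show 1 + 1 / t = (t + 1) / t by field_simp, Real.log_div ht1.ne' ht.ne']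
  simp only [hg] at hgpos
  rw [hlog, key] at hgpos
  linarith

theorem digamma_succ_sub_log_lt (x : ℝ) (hx : 0 < x) :
    digamma (x + 1) - Real.log x < 1 / (2 * x) := by
  -- T n = ∑_{k<n} 1/(x+k+1)
  set T : ℕ → ℝ := fun n => ∑ k ∈ Finset.range n, 1 / (x + k + 1) with hT
  have hrec : ∀ n : ℕ, digamma (x + n + 1) = digamma (x + 1) + T n := by
    intro n
    induction n with
    | zero => simp [hT]
    | succ n ih =>
      have hpos : (0:ℝ) < x + n + 1 := by positivity
      have : digamma (x + (n + 1 : ℕ) + 1) = digamma ((x + n + 1) + 1) := by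
        push_cast; ring_nf
      rw [this, digamma_add_one hpos, ih]
      simp only [hT, Finset.sum_range_succ]
      ring
  have hR : ∀ n : ℕ, Real.log (x + n + 1) - T n
      ≤ Real.log (x + 1) - 1 / (2 * (x + 1)) + 1 / (2 * (x + n + 1)) := by
    intro n
    induction n with
    | zero => simp [hT]
    | succ n ih =>
      have hpos : (0:ℝ) < x + n + 1 := by positivity
      have htrap := log_trapezoid hpos
      have hcast : Real.log (x + (n + 1 : ℕ) + 1) = Real.log ((x + n + 1) + 1) := by
        push_cast; ring_nf
      rw [hcast]
      simp only [hT, Finset.sum_range_succ]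
      have h1 : (0:ℝ) < x + n + 1 + 1 := by linarith
      have hc2 : (x:ℝ) + (n:ℝ) + 1 + 1 = x + ((n:ℝ) + 1) + 1 := by ring
      rw [hc2] at htrap h1 ⊢
      simp only [hT] at ih
      push_cast
      have hhalf : (1:ℝ) / (x + n + 1) = 1 / (2 * (x + n + 1)) + 1 / (2 * (x + n + 1)) := by
        rw [← add_div, div_eq_div_iff hpos.ne' (by positivity)]
        ring
      linarith [htrap, ih]
  have hub : ∀ n : ℕ, digamma (x + 1)
      ≤ Real.log (x + 1) - 1 / (2 * (x + 1)) + 1 / (2 * (x + n + 1)) := by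
    intro n
    have hpos : (0:ℝ) < x + n + 1 := by positivity
    have := digamma_le_log hpos
    rw [hrec n] at this
    linarith [hR n]
  set δ : ℝ := Real.log x + 1 / (2 * x) - (Real.log (x + 1) - 1 / (2 * (x + 1))) with hδ
  have hδpos : 0 < δ := by
    have := log_trapezoid hx
    simp only [hδ]
    linarith
  obtain ⟨n, hn⟩ := exists_nat_gt (1 / δ)
  have hnpos : (0:ℝ) < n := lt_trans (by positivity) hn
  have hsmall : 1 / (2 * (x + n + 1)) < δ := by
    have h1 : 1 / (2 * (x + n + 1)) < 1 / (n : ℝ) := by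
      apply one_div_lt_one_div_of_lt hnpos
      linarith
    have h2 : 1 / (n : ℝ) < δ := by
      rw [div_lt_iff₀ hnpos]
      have := (div_lt_iff₀ hδpos).mp hn
      nlinarith
    linarith
  have := hub n
  simp only [hδ] at hsmall
  linarith
end

section
/- For all real x > 0, 1/(2x) - 1/(12x²) < ψ(x+1) - log x, where ψ is the digamma function. -/
open Real Filter

namespace DigammaAux

open Set Topology

noncomputable def f : ℝ → ℝ := Real.log ∘ Real.Gamma

noncomputable def F (y : ℝ) : ℝ := 1 / (2 * y) - 1 / (12 * y ^ 2)

noncomputable def phi (t : ℝ) : ℝ :=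
  Real.log (1 + t) - t / 2 - t / (2 * (1 + t)) + t ^ 2 / 12 - t ^ 2 / (12 * (1 + t) ^ 2)

lemma hasDerivAt_phi {t : ℝ} (ht : -1 < t) :
    HasDerivAt phi (t ^ 4 / (6 * (1 + t) ^ 3)) t := by
  have h0 : (1 : ℝ) + t ≠ 0 := by linarith
  have h0' : (2 : ℝ) * (1 + t) ≠ 0 := mul_ne_zero two_ne_zero h0
  have h0'' : (12 : ℝ) * (1 + t) ^ 2 ≠ 0 := by
    apply mul_ne_zero (by norm_num) (pow_ne_zero _ h0)
  have h1 : HasDerivAt (fun s : ℝ => Real.log (1 + s)) (1 / (1 + t)) t := by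
    simpa using ((hasDerivAt_id t).const_add 1).log h0
  have h2 : HasDerivAt (fun s : ℝ => s / 2) (1 / 2) t := (hasDerivAt_id t).div_const 2
  have hden : HasDerivAt (fun s : ℝ => 2 * (1 + s)) (2 * 1) t :=
    ((hasDerivAt_id t).const_add 1).const_mul 2
  have h3 : HasDerivAt (fun s : ℝ => s / (2 * (1 + s)))
      ((1 * (2 * (1 + t)) - t * (2 * 1)) / (2 * (1 + t)) ^ 2) t :=
    (hasDerivAt_id t).div hden h0'
  have h4 : HasDerivAt (fun s : ℝ => s ^ 2 / 12) (((2:ℕ) * t ^ 1) / 12) t :=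
    (hasDerivAt_pow 2 t).div_const 12
  have hden2 : HasDerivAt (fun s : ℝ => 12 * (1 + s) ^ 2) (12 * ((2:ℕ) * (1 + t) ^ 1 * 1)) t :=
    (((hasDerivAt_id t).const_add 1).pow 2).const_mul 12
  have h5 : HasDerivAt (fun s : ℝ => s ^ 2 / (12 * (1 + s) ^ 2))
      (((2:ℕ) * t ^ 1 * (12 * (1 + t) ^ 2) - t ^ 2 * (12 * ((2:ℕ) * (1 + t) ^ 1 * 1))) /
        (12 * (1 + t) ^ 2) ^ 2) t :=
    (hasDerivAt_pow 2 t).div hden2 h0''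
  have := (((h1.sub h2).sub h3).add h4).sub h5
  refine this.congr_deriv ?_
  have h6 : ((1 + t) ^ 2) ≠ 0 := pow_ne_zero _ h0
  field_simp
  ring

lemma phi_pos {t : ℝ} (ht : 0 < t) : 0 < phi t := by
  have h1 : ContinuousOn phi (Ici 0) := fun s hs =>
    (hasDerivAt_phi (by simp at hs; linarith)).continuousAt.continuousWithinAt
  have h2 : StrictMonoOn phi (Ici 0) := by
    apply strictMonoOn_of_deriv_pos (convex_Ici 0) h1
    intro s hs
    rw [interior_Ici] at hs
    rw [(hasDerivAt_phi (by simp at hs; linarith)).deriv]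
    have : (0:ℝ) < s := hs
    positivity
  have h3 : phi 0 = 0 := by simp [phi]
  have := h2 (self_mem_Ici) (le_of_lt ht : (0:ℝ) ≤ t) ht
  linarith

lemma key_ineq {y : ℝ} (hy : 0 < y) :
    F y - F (y + 1) < Real.log (y + 1) - Real.log y - 1 / (y + 1) := by
  have h := phi_pos (t := 1 / y) (by positivity)
  have hy' : y ≠ 0 := hy.ne'
  have hy1 : y + 1 ≠ 0 := by positivity
  have hlog : Real.log (1 + 1 / y) = Real.log (y + 1) - Real.log y := by
    rw [show (1:ℝ) + 1 / y = (y + 1) / y by field_simp,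
      Real.log_div hy1 hy']
  rw [phi, hlog] at h
  have hid : Real.log (y + 1) - Real.log y - 1 / (y + 1) - (F y - F (y + 1)) =
      Real.log (y + 1) - Real.log y - 1 / y / 2 - 1 / y / (2 * (1 + 1 / y)) +
        (1 / y) ^ 2 / 12 - (1 / y) ^ 2 / (12 * (1 + 1 / y) ^ 2) := by
    rw [F, F]
    have : (1:ℝ) + 1 / y ≠ 0 := by positivity
    field_simp
    ring
  linarith

lemma hderf {x : ℝ} (hx : 0 < x) : DifferentiableAt ℝ f x := by
  refine (Real.differentiableAt_Gamma ?_).log (Real.Gamma_ne_zero ?_) <;>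
    exact fun m => ((neg_nonpos.mpr (Nat.cast_nonneg m)).trans_lt hx).ne'

lemma frec (y : ℝ) (hy : 0 < y) : f (y + 1) = f y + Real.log y := by
  simp only [f, Function.comp_apply, Real.Gamma_add_one hy.ne',
    Real.log_mul hy.ne' (Real.Gamma_pos_of_pos hy).ne', add_comm]

lemma derivLB {y : ℝ} (hy : 0 < y) : Real.log y ≤ deriv f (y + 1) := by
  have hc : ConvexOn ℝ (Ioi 0) f := Real.convexOn_log_Gamma
  refine (le_of_eq ?_).trans <| hc.slope_le_deriv (mem_Ioi.mpr hy)
    (mem_Ioi.mpr (by linarith : (0:ℝ) < y + 1)) (by linarith) (hderf (by linarith))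
  rw [slope_def_field, show y + 1 - y = (1 : ℝ) by ring, div_one, frec y hy,
    add_sub_cancel_left]

lemma hder_rec {y : ℝ} (hy : 0 < y) : deriv f (y + 1) = deriv f y + 1 / y := by
  rw [← deriv_comp_add_const, one_div, ← Real.deriv_log,
    ← deriv_add (hderf hy) (Real.differentiableAt_log hy.ne')]
  apply Filter.EventuallyEq.deriv_eq
  filter_upwards [eventually_gt_nhds hy] using frec

lemma deriv_f_add_nat (x : ℝ) (hx : 0 < x) (n : ℕ) :
    deriv f (x + 1 + n) = deriv f (x + 1) + ∑ k ∈ Finset.range n, 1 / (x + k + 1) := by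
  induction n with
  | zero => simp
  | succ n ih =>
      have hpos : (0:ℝ) < x + 1 + n := by
        have : (0:ℝ) ≤ (n:ℝ) := Nat.cast_nonneg n
        linarith
      have h : x + 1 + ((n + 1 : ℕ) : ℝ) = (x + 1 + n) + 1 := by push_cast; ring
      rw [h, hder_rec hpos, ih, Finset.sum_range_succ]
      push_cast
      ring

end DigammaAux

open DigammaAux

theorem lt_digamma_succ_sub_log (x : ℝ) (hx : 0 < x) :
    1 / (2 * x) - 1 / (12 * x ^ 2) < digamma (x + 1) - Real.log x := by
  have hx1 : (0:ℝ) < x + 1 := by linarith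
  have hdig : digamma (x + 1) = deriv f (x + 1) := by
    rw [digamma, f, Function.comp_def,
      deriv.log (Real.differentiableAt_Gamma
        (fun m => ((neg_nonpos.mpr (Nat.cast_nonneg m)).trans_lt hx1).ne'))
        (Real.Gamma_pos_of_pos hx1).ne']
  set δ : ℝ := (Real.log (x + 1) - Real.log x - 1 / (x + 1)) - (F x - F (x + 1)) with hδ
  have hδpos : 0 < δ := sub_pos.mpr (key_ineq hx)
  obtain ⟨n, hn⟩ := exists_nat_gt (1 / (2 * δ) + 1)
  have hinv : 0 < 1 / (2 * δ) := by positivity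
  have hnR : (1:ℝ) ≤ n := by linarith
  have hn1 : 1 ≤ n := by exact_mod_cast hnR
  have hxn : (0:ℝ) < x + n := by linarith
  set S : ℝ := ∑ k ∈ Finset.range n, 1 / (x + k + 1) with hS
  have h1 : Real.log (x + n) ≤ deriv f (x + 1) + S := by
    have h := derivLB hxn
    rwa [show x + (n:ℝ) + 1 = x + 1 + n by ring, deriv_f_add_nat x hx n] at h
  set L : ℕ → ℝ := fun k => Real.log (x + k) with hL
  set Fk : ℕ → ℝ := fun k => F (x + k) with hFk
  set T : ℝ := ∑ k ∈ Finset.range n,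
      ((L (k + 1) - L k - 1 / (x + k + 1)) - (Fk k - Fk (k + 1))) with hT
  have hterm : ∀ k : ℕ, (0:ℝ) ≤
      (L (k + 1) - L k - 1 / (x + k + 1)) - (Fk k - Fk (k + 1)) := by
    intro k
    have hk : (0:ℝ) < x + k := by
      have : (0:ℝ) ≤ (k:ℝ) := Nat.cast_nonneg k
      linarith
    have h := key_ineq hk
    have heq : (L (k + 1) - L k - 1 / (x + k + 1)) - (Fk k - Fk (k + 1)) =
        (Real.log (x + k + 1) - Real.log (x + k) - 1 / (x + k + 1)) -
          (F (x + k) - F (x + k + 1)) := by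
      simp only [hL, hFk]
      push_cast
      ring_nf
    rw [heq]
    linarith
  have hterm0 : (L (0 + 1) - L 0 - 1 / (x + ((0:ℕ):ℝ) + 1)) - (Fk 0 - Fk (0 + 1)) = δ := by
    simp only [hL, hFk, hδ]
    norm_num
  have hTδ : δ ≤ T := by
    have h := Finset.single_le_sum (f := fun k : ℕ =>
      L (k + 1) - L k - 1 / (x + (k:ℝ) + 1) - (Fk k - Fk (k + 1)))
      (fun k _ => hterm k) (Finset.mem_range.mpr hn1)
    try simp only at h
    rw [hterm0] at h
    exact h
  have hTeq : T = (Real.log (x + n) - Real.log x - S) - (F x - F (x + n)) := by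
    rw [hT, hS]
    rw [Finset.sum_sub_distrib, Finset.sum_sub_distrib,
      Finset.sum_range_sub (f := L), Finset.sum_range_sub' (f := Fk)]
    simp only [hL, hFk]
    norm_num
  have h3 : F (x + n) < δ := by
    have h4 : 1 / (2 * (x + n)) < δ := by
      rw [div_lt_iff₀ (by positivity)]
      have : 1 / (2 * δ) < x + n := by linarith
      rw [div_lt_iff₀ (by positivity)] at this
      nlinarith
    have h5 : F (x + n) ≤ 1 / (2 * (x + n)) := by
      have : 0 < 12 * (x + n) ^ 2 := by positivity
      simp only [F]
      nlinarith [one_div_pos.mpr this]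
    exact lt_of_le_of_lt h5 h4
  have hfinal : F x < deriv f (x + 1) - Real.log x := by linarith [hTδ, hTeq.le, hTeq.ge, h1]
  rw [hdig]
  simpa [F] using hfinal
end

section
/- For all real x > 0, 1/(2x²) - 1/(6x³) < 1/x - ψ'(x+1) < 1/(2x²) - 1/(6x³) + 1/(30x⁵), where ψ' is the trigamma function. -/
open Real Filter Topology

namespace TrigammaAux


noncomputable def psiC : ℂ → ℂ := fun s => deriv Complex.Gamma s / Complex.Gamma s

noncomputable def tri (y : ℝ) : ℝ := (deriv psiC y).re

lemma ne_neg_nat {s : ℂ} (hs : 0 < s.re) (m : ℕ) : s ≠ -m := by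
  intro h
  rw [h] at hs
  simp only [Complex.neg_re, Complex.natCast_re] at hs
  have : (0:ℝ) ≤ m := Nat.cast_nonneg m
  linarith

lemma isOpen_pos_re : IsOpen {s : ℂ | 0 < s.re} :=
  isOpen_lt continuous_const Complex.continuous_re

lemma analyticOnNhd_cGamma : AnalyticOnNhd ℂ Complex.Gamma {s : ℂ | 0 < s.re} := by
  apply DifferentiableOn.analyticOnNhd _ isOpen_pos_re
  exact fun s hs => (Complex.differentiableAt_Gamma s (ne_neg_nat hs)).differentiableWithinAt

lemma analyticAt_psiC {y : ℝ} (hy : 0 < y) : AnalyticAt ℂ psiC (y : ℂ) := by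
  have hmem : (y:ℂ) ∈ {s : ℂ | 0 < s.re} := by simpa using hy
  exact ((analyticOnNhd_cGamma.deriv_of_isOpen isOpen_pos_re) _ hmem).div
    (analyticOnNhd_cGamma _ hmem) (Complex.Gamma_ne_zero (ne_neg_nat (by simpa using hy)))

lemma deriv_cGamma_ofReal {y : ℝ} (hy : 0 < y) :
    deriv Complex.Gamma (y : ℂ) = Complex.ofReal (deriv Real.Gamma y) := by
  have hm : ∀ m : ℕ, (y:ℂ) ≠ -m := ne_neg_nat (by simpa using hy)
  have hm' : ∀ m : ℕ, y ≠ -(m:ℝ) := fun m h => by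
    have : (0:ℝ) ≤ m := Nat.cast_nonneg m; linarith [h ▸ hy]
  have hC : HasDerivAt Complex.Gamma (deriv Complex.Gamma (y:ℂ)) (y:ℂ) :=
    (Complex.differentiableAt_Gamma _ hm).hasDerivAt
  have h1 : HasDerivAt (fun t : ℝ => Complex.Gamma (t:ℂ)) (deriv Complex.Gamma (y:ℂ)) y :=
    hC.comp_ofReal
  have hR : HasDerivAt Real.Gamma (deriv Real.Gamma y) y :=
    (Real.differentiableAt_Gamma hm').hasDerivAt
  have h2 : HasDerivAt (fun t : ℝ => ((Real.Gamma t : ℂ))) (Complex.ofReal (deriv Real.Gamma y)) y :=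
    hR.ofReal_comp
  have : (fun t : ℝ => Complex.Gamma (t:ℂ)) = fun t : ℝ => ((Real.Gamma t : ℂ)) := by
    funext t; exact Complex.Gamma_ofReal t
  exact (this ▸ h1).unique h2

lemma psiC_ofReal {y : ℝ} (hy : 0 < y) : psiC (y : ℂ) = (digamma y : ℂ) := by
  rw [psiC, deriv_cGamma_ofReal hy, Complex.Gamma_ofReal, digamma, Complex.ofReal_div]

lemma hasDerivAt_digamma {y : ℝ} (hy : 0 < y) : HasDerivAt digamma (tri y) y := by
  have hA : AnalyticAt ℂ psiC (y : ℂ) := analyticAt_psiC hy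
  have h : HasDerivAt (fun x : ℝ => (psiC (x:ℂ)).re) (tri y) y :=
    hA.differentiableAt.hasDerivAt.real_of_complex
  apply h.congr_of_eventuallyEq
  filter_upwards [eventually_gt_nhds hy] with t ht
  rw [psiC_ofReal ht, Complex.ofReal_re]




lemma real_ne_neg_nat {y : ℝ} (hy : 0 < y) : ∀ m : ℕ, y ≠ -(m:ℝ) := fun m h => by
  have : (0:ℝ) ≤ m := Nat.cast_nonneg m; linarith [h ▸ hy]

lemma digamma_rec {t : ℝ} (ht : 0 < t) : digamma (t + 1) = digamma t + 1 / t := by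
  have hG : HasDerivAt Real.Gamma (deriv Real.Gamma t) t :=
    (Real.differentiableAt_Gamma (real_ne_neg_nat ht)).hasDerivAt
  have h1 : HasDerivAt (fun u : ℝ => u * Real.Gamma u)
      (Real.Gamma t + t * deriv Real.Gamma t) t := by
    simpa [add_comm] using (hasDerivAt_id' t).fun_mul hG
  have h3 : HasDerivAt (fun u : ℝ => Real.Gamma (u + 1)) (deriv Real.Gamma (t + 1)) t :=
    HasDerivAt.comp_add_const t 1
      (Real.differentiableAt_Gamma (real_ne_neg_nat (by linarith))).hasDerivAt
  have h2 : HasDerivAt (fun u : ℝ => Real.Gamma (u + 1))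
      (Real.Gamma t + t * deriv Real.Gamma t) t := by
    apply h1.congr_of_eventuallyEq
    filter_upwards [eventually_gt_nhds ht] with u hu
    rw [Real.Gamma_add_one hu.ne']
  have key : deriv Real.Gamma (t + 1) = Real.Gamma t + t * deriv Real.Gamma t := h3.unique h2
  have hΓ : Real.Gamma t ≠ 0 := (Real.Gamma_pos_of_pos ht).ne'
  rw [digamma, digamma, key, Real.Gamma_add_one ht.ne']
  field_simp
  ring

lemma tri_rec {y : ℝ} (hy : 0 < y) : tri y = tri (y + 1) + 1 / y ^ 2 := by
  have h1 : HasDerivAt (fun t : ℝ => digamma (t + 1)) (tri (y + 1)) y :=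
    HasDerivAt.comp_add_const y 1 (hasDerivAt_digamma (by linarith))
  have h2 : HasDerivAt (fun t : ℝ => digamma t + 1 / t) (tri y - 1 / y ^ 2) y := by
    have := (hasDerivAt_digamma hy).fun_add ((hasDerivAt_inv hy.ne'))
    simpa [one_div, sub_eq_add_neg] using this
  have h3 : HasDerivAt (fun t : ℝ => digamma (t + 1)) (tri y - 1 / y ^ 2) y := by
    apply h2.congr_of_eventuallyEq
    filter_upwards [eventually_gt_nhds hy] with t ht
    rw [digamma_rec ht]
  have := h1.unique h3
  linarith

lemma deriv_log_Gamma {t : ℝ} (ht : 0 < t) :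
    deriv (Real.log ∘ Real.Gamma) t = digamma t := by
  rw [Function.comp_def, deriv.log (Real.differentiableAt_Gamma (real_ne_neg_nat ht))
    (Real.Gamma_pos_of_pos ht).ne', digamma]

lemma digamma_mono {a b : ℝ} (ha : 0 < a) (hab : a < b) : digamma a ≤ digamma b := by
  have hc := Real.convexOn_log_Gamma
  have hda : DifferentiableAt ℝ (Real.log ∘ Real.Gamma) a :=
    ((Real.differentiableAt_Gamma (real_ne_neg_nat ha)).log
      (Real.Gamma_pos_of_pos ha).ne')
  have hdb : DifferentiableAt ℝ (Real.log ∘ Real.Gamma) b :=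
    ((Real.differentiableAt_Gamma (real_ne_neg_nat (ha.trans hab))).log
      (Real.Gamma_pos_of_pos (ha.trans hab)).ne')
  have h1 := hc.deriv_le_slope (Set.mem_Ioi.mpr ha) (Set.mem_Ioi.mpr (ha.trans hab)) hab hda
  have h2 := hc.slope_le_deriv (Set.mem_Ioi.mpr ha) (Set.mem_Ioi.mpr (ha.trans hab)) hab hdb
  rw [← deriv_log_Gamma ha, ← deriv_log_Gamma (ha.trans hab)]
  exact h1.trans h2

lemma tri_nonneg {y : ℝ} (hy : 0 < y) : 0 ≤ tri y := by
  have h := (hasDerivAt_iff_tendsto_slope.mp (hasDerivAt_digamma hy))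
  have h' : Tendsto (slope digamma y) (𝓝[>] y) (𝓝 (tri y)) :=
    h.mono_left (nhdsWithin_mono _ (fun z hz => ne_of_gt hz))
  refine ge_of_tendsto h' ?_
  filter_upwards [self_mem_nhdsWithin] with z hz
  have hz' : y < z := hz
  rw [slope_def_field]
  apply div_nonneg _ (by linarith)
  have := digamma_mono hy hz'
  linarith

lemma summable_inv_sq {y : ℝ} (hy : 0 < y) : Summable (fun n : ℕ => 1 / (y + n) ^ 2) := by
  have h0 : Summable (fun n : ℕ => 1 / ((n:ℝ)) ^ 2) := by
    rw [Real.summable_one_div_nat_pow]; norm_num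
  have h1 : Summable (fun n : ℕ => 1 / (((n:ℕ) + 1 : ℝ)) ^ 2) := by
    have := (summable_nat_add_iff 1).mpr h0
    apply this.congr
    intro n; push_cast; ring_nf
  have h2 : Summable (fun n : ℕ => 1 / (y + ((n + 1 : ℕ) : ℝ)) ^ 2) := by
    apply h1.of_nonneg_of_le (fun n => by positivity)
    intro n
    apply one_div_le_one_div_of_le (by positivity)
    apply pow_le_pow_left₀ (by positivity)
    push_cast; linarith
  exact (summable_nat_add_iff 1).mp h2

lemma tri_partial {y : ℝ} (hy : 0 < y) (N : ℕ) :
    tri y = (∑ k ∈ Finset.range N, 1 / (y + k) ^ 2) + tri (y + N) := by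
  induction N with
  | zero => simp
  | succ N ih =>
    rw [Finset.sum_range_succ, ih]
    push_cast
    have : tri (y + N) = tri (y + N + 1) + 1 / (y + N) ^ 2 := tri_rec (by positivity)
    rw [this, show y + ((N:ℝ) + 1) = y + (N:ℝ) + 1 by ring]
    ring

noncomputable def S (y : ℝ) : ℝ := ∑' n : ℕ, 1 / (y + n) ^ 2

lemma c_nonneg {y : ℝ} (hy : 0 < y) : S y ≤ tri y := by
  have hs := (summable_inv_sq hy).hasSum.tendsto_sum_nat
  have h1 : Tendsto (fun N : ℕ => tri (y + N)) atTop (𝓝 (tri y - S y)) := by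
    have : (fun N : ℕ => tri (y + N)) =
        fun N : ℕ => tri y - ∑ k ∈ Finset.range N, 1 / (y + k) ^ 2 := by
      funext N; rw [tri_partial hy N]; ring
    rw [this]
    rw [S]
    simpa [one_div] using (tendsto_const_nhds (x := tri y)).sub hs
  have h2 : 0 ≤ tri y - S y :=
    ge_of_tendsto h1 (Eventually.of_forall fun N => tri_nonneg (by positivity))
  linarith



noncomputable def T (z : ℝ) : ℝ := ∑' n : ℕ, (1 / ((n:ℝ) + 1) - 1 / (z + n))

lemma summable_T {y : ℝ} (hy : 0 < y) :
    Summable (fun n : ℕ => 1 / ((n:ℝ) + 1) - 1 / (y + n)) := by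
  set m := min y 1 with hm
  have hm0 : 0 < m := lt_min hy one_pos
  have hbase : Summable (fun n : ℕ => 1 / m * (1 / ((n:ℝ) + 1) ^ 2)) := by
    apply Summable.mul_left
    have h0 : Summable (fun n : ℕ => 1 / ((n:ℝ)) ^ 2) := by
      rw [Real.summable_one_div_nat_pow]; norm_num
    exact ((summable_nat_add_iff 1).mpr h0).congr (fun n => by push_cast; ring)
  have hmid : Summable (fun n : ℕ => 1 / (((n:ℝ) + 1) * (y + n))) := by
    apply hbase.of_nonneg_of_le (fun n => by positivity)
    intro n
    have key : m * ((n:ℝ)+1)^2 ≤ ((n:ℝ)+1) * (y + n) := by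
      have hmy : m ≤ y := min_le_left _ _
      have hm1 : m ≤ 1 := min_le_right _ _
      have hn0 := Nat.cast_nonneg (α := ℝ) n
      have h1 : m * ((n:ℝ)+1) ≤ y + n := by nlinarith
      have := mul_le_mul_of_nonneg_right h1 (by positivity : (0:ℝ) ≤ (n:ℝ)+1)
      nlinarith
    calc 1 / (((n:ℝ) + 1) * (y + n)) ≤ 1 / (m * ((n:ℝ)+1)^2) :=
          one_div_le_one_div_of_le (by positivity) key
      _ = 1 / m * (1 / ((n:ℝ) + 1) ^ 2) := by
          rw [one_div_mul_eq_div, div_div, mul_comm]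
  have := hmid.mul_left (y - 1)
  apply this.congr
  intro n
  have h1 : ((n:ℝ) + 1) ≠ 0 := by positivity
  have h2 : (y + (n:ℝ)) ≠ 0 := by positivity
  field_simp
  ring

lemma hasDerivAt_T {y : ℝ} (hy : 0 < y) : HasDerivAt T (S y) y := by
  have h := hasDerivAt_tsum_of_isPreconnected
    (summable_inv_sq (half_pos hy)) (isOpen_Ioi (a := y/2))
    ((convex_Ioi (y/2)).isPreconnected)
    (g := fun (n : ℕ) (z : ℝ) => 1 / ((n:ℝ) + 1) - 1 / (z + n))
    (g' := fun (n : ℕ) (z : ℝ) => 1 / (z + n) ^ 2)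
    (y₀ := y) (y := y) ?_ ?_ ?_ ?_ ?_
  · exact h
  · intro n z hz
    have hz0 : 0 < z := lt_trans (half_pos hy) hz
    have hzn : (0:ℝ) < z + n := by positivity
    have h1 : HasDerivAt (fun w : ℝ => w + (n:ℝ)) 1 z := (hasDerivAt_id z).add_const _
    have h2 := h1.inv hzn.ne'
    have h3 := h2.const_sub (1 / ((n:ℝ) + 1))
    simpa [one_div, neg_div, neg_neg] using h3
  · intro n z hz
    have hz' : y/2 ≤ z := le_of_lt hz
    have h1 : (0:ℝ) < y/2 + n := by positivity
    rw [Real.norm_eq_abs, abs_of_nonneg (by positivity)]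
    apply one_div_le_one_div_of_le (by positivity)
    apply pow_le_pow_left₀ (by positivity)
    linarith
  · exact Set.mem_Ioi.mpr (half_lt_self hy)
  · exact summable_T hy
  · exact Set.mem_Ioi.mpr (half_lt_self hy)

lemma hasSum_telescope {y : ℝ} (hy : 0 < y) :
    HasSum (fun n : ℕ => 1 / (y + n) - 1 / (y + n + 1)) (1 / y) := by
  have hnn : ∀ n : ℕ, 0 ≤ 1 / (y + n) - 1 / (y + n + 1) := by
    intro n
    have h1 : (0:ℝ) < y + n := by positivity
    have := one_div_le_one_div_of_le h1 (by linarith : y + n ≤ y + n + 1)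
    linarith
  rw [hasSum_iff_tendsto_nat_of_nonneg hnn]
  have hps : ∀ N : ℕ, ∑ n ∈ Finset.range N, (1 / (y + n) - 1 / (y + n + 1))
      = 1 / y - 1 / (y + N) := by
    intro N
    have := Finset.sum_range_sub' (f := fun n : ℕ => 1 / (y + n)) N
    simp only [Nat.cast_zero, add_zero] at this
    rw [← this]
    apply Finset.sum_congr rfl
    intro k _
    push_cast
    ring_nf
  simp only [hps]
  have h1 : Tendsto (fun N : ℕ => 1 / (y + N)) atTop (𝓝 0) := by
    simp only [one_div]
    apply Tendsto.inv_tendsto_atTop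
    exact tendsto_atTop_add_const_left _ _ tendsto_natCast_atTop_atTop
  simpa using (tendsto_const_nhds (x := 1/y)).sub h1

lemma T_rec {y : ℝ} (hy : 0 < y) : T (y + 1) = T y + 1 / y := by
  have h1 := (summable_T (by linarith : (0:ℝ) < y + 1)).hasSum
  have h2 := (summable_T hy).hasSum
  have h3 : HasSum (fun n : ℕ => (1 / ((n:ℝ) + 1) - 1 / (y + 1 + n))
      - (1 / ((n:ℝ) + 1) - 1 / (y + n))) (T (y+1) - T y) := h1.sub h2
  have hfe : (fun n : ℕ => (1 / ((n:ℝ) + 1) - 1 / (y + 1 + n))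
      - (1 / ((n:ℝ) + 1) - 1 / (y + n))) = fun n : ℕ => 1 / (y + n) - 1 / (y + n + 1) := by
    funext n; ring_nf
  rw [hfe] at h3
  have := h3.unique (hasSum_telescope hy)
  linarith



lemma tri_eq_S {y : ℝ} (hy : 1/2 < y) : tri y = S y := by
  have hy0 : (0:ℝ) < y := by linarith
  set D : ℝ → ℝ := fun z => digamma z - T z with hD
  have hDer : ∀ z ∈ Set.Ioi (0:ℝ), HasDerivAt D (tri z - S z) z := fun z hz =>
    (hasDerivAt_digamma hz).sub (hasDerivAt_T hz)
  have hmono : MonotoneOn D (Set.Ioi (0:ℝ)) := by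
    apply monotoneOn_of_deriv_nonneg (convex_Ioi 0)
    · exact fun z hz => ((hDer z hz).continuousAt).continuousWithinAt
    · intro z hz
      rw [interior_Ioi] at hz
      exact ((hDer z hz).differentiableAt).differentiableWithinAt
    · intro z hz
      rw [interior_Ioi] at hz
      rw [(hDer z hz).deriv]
      have := c_nonneg hz
      linarith
  set a : ℝ := y - 1/2 with ha
  have ha0 : (0:ℝ) < a := by simp [ha]; linarith
  have hper : D (a + 1) = D a := by
    simp only [hD]
    rw [digamma_rec ha0, T_rec ha0]
    ring
  have hconst : ∀ z ∈ Set.Icc a (a + 1), D z = D a := by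
    intro z hz
    apply le_antisymm
    · have := hmono (Set.mem_Ioi.mpr (by linarith [hz.1] : (0:ℝ) < z))
        (Set.mem_Ioi.mpr (by linarith : (0:ℝ) < a + 1)) hz.2
      linarith [hper]
    · exact hmono (Set.mem_Ioi.mpr ha0) (Set.mem_Ioi.mpr (by linarith [hz.1])) hz.1
  have hev : D =ᶠ[𝓝 y] fun _ => D a := by
    filter_upwards [Ioo_mem_nhds (by rw [ha]; linarith : a < y) (by rw [ha]; linarith : y < a + 1)]
      with z hz
    exact hconst z ⟨le_of_lt hz.1, le_of_lt hz.2⟩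
  have h0 : HasDerivAt D 0 y := by
    exact (hasDerivAt_const y (D a)).congr_of_eventuallyEq hev
  have := (hDer y (Set.mem_Ioi.mpr hy0)).unique h0
  linarith


noncomputable def gfun (t : ℝ) : ℝ := 1 / (2 * t ^ 2) - 1 / (6 * t ^ 3)
noncomputable def hfun (t : ℝ) : ℝ := 1 / (2 * t ^ 2) - 1 / (6 * t ^ 3) + 1 / (30 * t ^ 5)

lemma hasSum_F {x : ℝ} (hx : 0 < x) :
    HasSum (fun n : ℕ => 1 / ((x + n) * (x + n + 1) ^ 2)) (1 / x - S (x + 1)) := by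
  have h1 := hasSum_telescope hx
  have he1 : (fun n : ℕ => 1 / (x + n) - 1 / (x + n + 1))
      = fun n : ℕ => 1 / ((x + n) * (x + n + 1)) := by
    funext n
    have h1 : (0:ℝ) < x + n := by positivity
    have h2 : (0:ℝ) < x + n + 1 := by positivity
    field_simp
    ring
  rw [he1] at h1
  have h2 : HasSum (fun n : ℕ => 1 / ((x + 1) + n) ^ 2) (S (x + 1)) :=
    (summable_inv_sq (by linarith)).hasSum
  have h3 := h1.sub h2
  have he2 : (fun n : ℕ => 1 / ((x + n) * (x + n + 1)) - 1 / ((x + 1) + n) ^ 2)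
      = fun n : ℕ => 1 / ((x + n) * (x + n + 1) ^ 2) := by
    funext n
    have h1 : (0:ℝ) < x + n := by positivity
    have h2 : (0:ℝ) < x + n + 1 := by positivity
    rw [show (x + 1) + (n:ℝ) = x + n + 1 by ring]
    field_simp
    ring
  rwa [he2] at h3

lemma tendsto_shift_zero {x c : ℝ} (hc : 0 < c) {k : ℕ} (hk : k ≠ 0) :
    Tendsto (fun N : ℕ => 1 / (c * (x + N) ^ k)) atTop (𝓝 0) := by
  have h : Tendsto (fun N : ℕ => x + (N:ℝ)) atTop atTop :=
    tendsto_atTop_add_const_left _ x tendsto_natCast_atTop_atTop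
  have h2 : Tendsto (fun N : ℕ => (x + (N:ℝ)) ^ k) atTop atTop :=
    (tendsto_pow_atTop hk).comp h
  have h3 : Tendsto (fun N : ℕ => c * (x + (N:ℝ)) ^ k) atTop atTop := h2.const_mul_atTop hc
  have h4 := h3.inv_tendsto_atTop
  simp only [one_div]
  exact h4

lemma tendsto_gfun_zero {x : ℝ} : Tendsto (fun N : ℕ => gfun (x + N)) atTop (𝓝 0) := by
  have h1 := tendsto_shift_zero (x := x) (c := (2:ℝ)) (by norm_num) (k := 2) (by norm_num)
  have h2 := tendsto_shift_zero (x := x) (c := (6:ℝ)) (by norm_num) (k := 3) (by norm_num)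
  simpa [gfun] using h1.sub h2

lemma tendsto_hfun_zero {x : ℝ} : Tendsto (fun N : ℕ => hfun (x + N)) atTop (𝓝 0) := by
  have h1 := tendsto_shift_zero (x := x) (c := (2:ℝ)) (by norm_num) (k := 2) (by norm_num)
  have h2 := tendsto_shift_zero (x := x) (c := (6:ℝ)) (by norm_num) (k := 3) (by norm_num)
  have h3 := tendsto_shift_zero (x := x) (c := (30:ℝ)) (by norm_num) (k := 5) (by norm_num)
  simpa [hfun] using (h1.sub h2).add h3

lemma gfun_tel {x : ℝ} (N : ℕ) :
    gfun x - gfun (x + N) = ∑ n ∈ Finset.range N, (gfun (x + n) - gfun (x + n + 1)) := by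
  have h := Finset.sum_range_sub' (f := fun n : ℕ => gfun (x + n)) N
  simp only [Nat.cast_zero, add_zero] at h
  rw [← h]
  apply Finset.sum_congr rfl
  intro k _
  push_cast
  rw [show x + ((k:ℝ) + 1) = x + k + 1 by ring]

lemma hfun_tel {x : ℝ} (N : ℕ) :
    hfun x - hfun (x + N) = ∑ n ∈ Finset.range N, (hfun (x + n) - hfun (x + n + 1)) := by
  have h := Finset.sum_range_sub' (f := fun n : ℕ => hfun (x + n)) N
  simp only [Nat.cast_zero, add_zero] at h
  rw [← h]
  apply Finset.sum_congr rfl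
  intro k _
  push_cast
  rw [show x + ((k:ℝ) + 1) = x + k + 1 by ring]

lemma gfun_diff {t : ℝ} (ht : 0 < t) :
    1 / ((t) * (t + 1) ^ 2) - (gfun t - gfun (t + 1)) = 1 / (6 * t ^ 3 * (t + 1) ^ 3) := by
  have h1 : t + 1 > 0 := by linarith
  rw [gfun, gfun]
  field_simp
  ring

lemma hfun_diff {t : ℝ} (ht : 0 < t) :
    (hfun t - hfun (t + 1)) - 1 / ((t) * (t + 1) ^ 2)
      = (5 * t ^ 2 + 5 * t + 1) / (30 * t ^ 5 * (t + 1) ^ 5) := by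
  have h1 : t + 1 > 0 := by linarith
  rw [hfun, hfun]
  field_simp
  ring

theorem main (x : ℝ) (hx : 0 < x) :
    gfun x < 1 / x - S (x + 1) ∧ 1 / x - S (x + 1) < hfun x := by
  have hF := hasSum_F hx
  have hps := hF.tendsto_sum_nat
  constructor
  · -- lower bound
    set ε : ℝ := 1 / (6 * x ^ 3 * (x + 1) ^ 3) with hε
    have hε0 : 0 < ε := by rw [hε]; positivity
    have hA : Tendsto (fun N : ℕ => (∑ n ∈ Finset.range N, 1 / ((x + n) * (x + n + 1) ^ 2))
        - gfun x + gfun (x + N)) atTop (𝓝 ((1 / x - S (x + 1)) - gfun x + 0)) :=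
      (hps.sub tendsto_const_nhds).add tendsto_gfun_zero
    have hbound : ∀ᶠ N : ℕ in atTop, ε ≤ (∑ n ∈ Finset.range N, 1 / ((x + n) * (x + n + 1) ^ 2))
        - gfun x + gfun (x + N) := by
      filter_upwards [eventually_ge_atTop 1] with N hN
      have heq : (∑ n ∈ Finset.range N, 1 / ((x + n) * (x + n + 1) ^ 2)) - gfun x + gfun (x + N)
          = ∑ n ∈ Finset.range N, 1 / (6 * (x + n) ^ 3 * (x + n + 1) ^ 3) := by
        have : (∑ n ∈ Finset.range N, 1 / ((x + n) * (x + n + 1) ^ 2)) - gfun x + gfun (x + N)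
            = (∑ n ∈ Finset.range N, 1 / ((x + n) * (x + n + 1) ^ 2))
              - ∑ n ∈ Finset.range N, (gfun (x + n) - gfun (x + n + 1)) := by
          rw [← gfun_tel]; ring
        rw [this, ← Finset.sum_sub_distrib]
        apply Finset.sum_congr rfl
        intro n _
        have hn : (0:ℝ) < x + n := by positivity
        exact gfun_diff hn
      rw [heq]
      have h0mem : (0:ℕ) ∈ Finset.range N := Finset.mem_range.mpr hN
      have := Finset.single_le_sum (f := fun n : ℕ => 1 / (6 * (x + n) ^ 3 * (x + n + 1) ^ 3))
        (fun n _ => by positivity) h0mem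
      simpa [hε] using this
    have := ge_of_tendsto hA hbound
    rw [add_zero] at this
    linarith
  · -- upper bound
    set ε : ℝ := (5 * x ^ 2 + 5 * x + 1) / (30 * x ^ 5 * (x + 1) ^ 5) with hε
    have hε0 : 0 < ε := by rw [hε]; positivity
    have hB : Tendsto (fun N : ℕ => hfun x - hfun (x + N)
        - (∑ n ∈ Finset.range N, 1 / ((x + n) * (x + n + 1) ^ 2)))
        atTop (𝓝 (hfun x - 0 - (1 / x - S (x + 1)))) :=
      (tendsto_const_nhds.sub tendsto_hfun_zero).sub hps
    have hbound : ∀ᶠ N : ℕ in atTop, ε ≤ hfun x - hfun (x + N)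
        - (∑ n ∈ Finset.range N, 1 / ((x + n) * (x + n + 1) ^ 2)) := by
      filter_upwards [eventually_ge_atTop 1] with N hN
      have heq : hfun x - hfun (x + N)
          - (∑ n ∈ Finset.range N, 1 / ((x + n) * (x + n + 1) ^ 2))
          = ∑ n ∈ Finset.range N,
              (5 * (x + n) ^ 2 + 5 * (x + n) + 1) / (30 * (x + n) ^ 5 * (x + n + 1) ^ 5) := by
        rw [hfun_tel, ← Finset.sum_sub_distrib]
        apply Finset.sum_congr rfl
        intro n _
        have hn : (0:ℝ) < x + n := by positivity
        exact hfun_diff hn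
      rw [heq]
      have h0mem : (0:ℕ) ∈ Finset.range N := Finset.mem_range.mpr hN
      have := Finset.single_le_sum
        (f := fun n : ℕ => (5 * (x + n) ^ 2 + 5 * (x + n) + 1) / (30 * (x + n) ^ 5 * (x + n + 1) ^ 5))
        (fun n _ => by positivity) h0mem
      simpa [hε] using this
    have := ge_of_tendsto hB hbound
    rw [sub_zero] at this
    linarith

end TrigammaAux

theorem trigamma_succ_bounds (x : ℝ) (hx : 0 < x) :
    1 / (2 * x ^ 2) - 1 / (6 * x ^ 3) < 1 / x - deriv digamma (x + 1) ∧
    1 / x - deriv digamma (x + 1) < 1 / (2 * x ^ 2) - 1 / (6 * x ^ 3) + 1 / (30 * x ^ 5) := by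
  have h1 : deriv digamma (x + 1) = TrigammaAux.tri (x + 1) :=
    (TrigammaAux.hasDerivAt_digamma (by linarith)).deriv
  have h2 : TrigammaAux.tri (x + 1) = TrigammaAux.S (x + 1) :=
    TrigammaAux.tri_eq_S (by linarith)
  have hm := TrigammaAux.main x hx
  rw [h1, h2]
  exact ⟨hm.1, hm.2⟩
end

section
/- The function x ↦ θ₁(x+1) - θ₁(x), where θ₁(x) = x(log x - ψ(x)), is strictly increasing on (0, ∞), and its derivative equals log(x+1) - log x - ψ'(x+1). -/
open Real Filter

open Set Topology Finset

namespace ThetaAux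

/-- The summand in the series for `log x - digamma x`. -/
noncomputable def aa (x : ℝ) (k : ℕ) : ℝ :=
  (x + k)⁻¹ - (Real.log (x + k + 1) - Real.log (x + k))

/-- The trigamma function as a series. -/
noncomputable def TT (x : ℝ) : ℝ := ∑' k : ℕ, ((x + k) ^ 2)⁻¹

lemma log_succ_sub_le {t : ℝ} (ht : 0 < t) : Real.log (t + 1) - Real.log t ≤ t⁻¹ := by
  have h := Real.log_le_sub_one_of_pos (x := (t+1)/t) (by positivity)
  rw [Real.log_div (by positivity) ht.ne'] at h
  have : (t+1)/t - 1 = t⁻¹ := by field_simp; ring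
  linarith

lemma le_log_succ_sub {t : ℝ} (ht : 0 < t) : (t + 1)⁻¹ ≤ Real.log (t + 1) - Real.log t := by
  have h := Real.log_le_sub_one_of_pos (x := t/(t+1)) (by positivity)
  rw [Real.log_div ht.ne' (by positivity)] at h
  have : t/(t+1) - 1 = -(t+1)⁻¹ := by field_simp; ring
  linarith

lemma aa_nonneg {x : ℝ} (hx : 0 < x) (k : ℕ) : 0 ≤ aa x k := by
  have ht : (0:ℝ) < x + k := by positivity
  have := log_succ_sub_le ht
  simp only [aa]; linarith

lemma aa_le {x : ℝ} (hx : 0 < x) (k : ℕ) : aa x k ≤ ((x + k) ^ 2)⁻¹ := by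
  have ht : (0:ℝ) < x + k := by positivity
  have h1 := le_log_succ_sub ht
  have h2 : (x + k)⁻¹ - (x + k + 1)⁻¹ ≤ ((x + k) ^ 2)⁻¹ := by
    rw [inv_sub_inv ht.ne' (by positivity), div_le_iff₀ (by positivity)]
    have h3 : (0:ℝ) < (x+k)^2 := by positivity
    rw [show x + k + 1 - (x + k) = 1 by ring]
    rw [inv_mul_eq_div, le_div_iff₀ h3]
    nlinarith
  simp only [aa]; linarith

lemma summable_base : Summable (fun k : ℕ => (((k:ℝ) + 1) ^ 2)⁻¹) := by
  have h : Summable (fun n : ℕ => 1 / (n:ℝ) ^ 2) := summable_one_div_nat_pow.mpr one_lt_two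
  have := h.comp_injective (i := fun k : ℕ => k + 1) (add_left_injective 1)
  exact this.congr fun k => by simp [Function.comp, one_div]

lemma summable_sq {x : ℝ} (hx : 0 < x) : Summable (fun k : ℕ => ((x + k) ^ 2)⁻¹) := by
  set m := min x 1 with hm
  have hm0 : 0 < m := lt_min hx one_pos
  apply Summable.of_nonneg_of_le (fun k => by positivity)
    (f := fun k : ℕ => (m ^ 2)⁻¹ * (((k:ℝ) + 1) ^ 2)⁻¹)
  · intro k
    have h1 : m * ((k:ℝ) + 1) ≤ x + k := by
      have h2 : m ≤ x := min_le_left _ _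
      have h3 : m ≤ 1 := min_le_right _ _
      have h4 : (0:ℝ) ≤ k := k.cast_nonneg
      nlinarith
    rw [← mul_inv, ← mul_pow]
    apply inv_anti₀ (by positivity)
    exact pow_le_pow_left₀ (by positivity) h1 2
  · exact summable_base.mul_left _

lemma summable_aa {x : ℝ} (hx : 0 < x) : Summable (aa x) :=
  Summable.of_nonneg_of_le (aa_nonneg hx) (aa_le hx) (summable_sq hx)

lemma diffGamma {x : ℝ} (hx : 0 < x) : DifferentiableAt ℝ Real.Gamma x :=
  Real.differentiableAt_Gamma fun m =>
    ((neg_nonpos.mpr m.cast_nonneg).trans_lt hx).ne'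

lemma hasDerivAt_logGamma {x : ℝ} (hx : 0 < x) :
    HasDerivAt (Real.log ∘ Real.Gamma) (digamma x) x :=
  (diffGamma hx).hasDerivAt.log (Real.Gamma_pos_of_pos hx).ne'

lemma f_rec {x : ℝ} (hx : 0 < x) :
    (Real.log ∘ Real.Gamma) (x + 1) = (Real.log ∘ Real.Gamma) x + Real.log x := by
  simp only [Function.comp_apply, Real.Gamma_add_one hx.ne',
    Real.log_mul hx.ne' (Real.Gamma_pos_of_pos hx).ne']
  ring

lemma digamma_add_one {x : ℝ} (hx : 0 < x) : digamma (x + 1) = digamma x + x⁻¹ := by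
  have h1 : deriv (Real.log ∘ Real.Gamma) (x + 1) = deriv (Real.log ∘ Real.Gamma) x + x⁻¹ := by
    rw [← deriv_comp_add_const, ← Real.deriv_log x,
      ← deriv_add (hasDerivAt_logGamma hx).differentiableAt (Real.differentiableAt_log hx.ne')]
    apply Filter.EventuallyEq.deriv_eq
    filter_upwards [eventually_gt_nhds hx] with y hy
    exact f_rec hy
  rwa [(hasDerivAt_logGamma (by linarith : (0:ℝ) < x + 1)).deriv,
    (hasDerivAt_logGamma hx).deriv] at h1

lemma digamma_le_log {x : ℝ} (hx : 0 < x) : digamma x ≤ Real.log x := by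
  have h := Real.convexOn_log_Gamma.deriv_le_slope (mem_Ioi.mpr hx)
    (mem_Ioi.mpr (by linarith : (0:ℝ) < x + 1)) (by linarith)
    (hasDerivAt_logGamma hx).differentiableAt
  rw [slope_def_field, f_rec hx, (hasDerivAt_logGamma hx).deriv] at h
  have h2 : ((Real.log ∘ Real.Gamma) x + Real.log x - (Real.log ∘ Real.Gamma) x) / (x + 1 - x)
      = Real.log x := by field_simp; ring
  rwa [h2] at h

lemma log_le_digamma_add_one {x : ℝ} (hx : 0 < x) : Real.log x ≤ digamma (x + 1) := by
  have h := Real.convexOn_log_Gamma.slope_le_deriv (mem_Ioi.mpr hx)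
    (mem_Ioi.mpr (by linarith : (0:ℝ) < x + 1)) (by linarith)
    (hasDerivAt_logGamma (by linarith : (0:ℝ) < x + 1)).differentiableAt
  rw [slope_def_field, f_rec hx, (hasDerivAt_logGamma (by linarith : (0:ℝ) < x+1)).deriv] at h
  have h2 : ((Real.log ∘ Real.Gamma) x + Real.log x - (Real.log ∘ Real.Gamma) x) / (x + 1 - x)
      = Real.log x := by field_simp; ring
  rwa [h2] at h

lemma digamma_nat {x : ℝ} (hx : 0 < x) (n : ℕ) :
    digamma (x + n) = digamma x + ∑ k ∈ range n, (x + k)⁻¹ := by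
  induction n with
  | zero => simp
  | succ n ih =>
    have h1 : x + ((n : ℕ) + 1 : ℕ) = (x + n) + 1 := by push_cast; ring
    rw [h1, digamma_add_one (by positivity), ih, sum_range_succ]
    ring

lemma partial_aa {x : ℝ} (hx : 0 < x) (n : ℕ) :
    ∑ k ∈ range n, aa x k =
      (Real.log x - digamma x) - (Real.log (x + n) - digamma (x + n)) := by
  have hlog : ∑ k ∈ range n, (Real.log (x + k + 1) - Real.log (x + k))
      = Real.log (x + n) - Real.log x := by
    have h := Finset.sum_range_sub (f := fun k : ℕ => Real.log (x + k)) n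
    calc ∑ k ∈ range n, (Real.log (x + k + 1) - Real.log (x + k))
        = ∑ k ∈ range n, (Real.log (x + ((k:ℕ) + 1 : ℕ)) - Real.log (x + k)) := by
          apply Finset.sum_congr rfl
          intro k _
          have hc : x + ((k : ℕ) + 1 : ℕ) = x + k + 1 := by push_cast; ring
          rw [hc]
      _ = Real.log (x + (n:ℕ)) - Real.log (x + (0:ℕ)) := h
      _ = Real.log (x + n) - Real.log x := by norm_num
  have hsum : ∑ k ∈ range n, aa x k
      = (∑ k ∈ range n, (x + k)⁻¹) - (Real.log (x + n) - Real.log x) := by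
    rw [← hlog, ← Finset.sum_sub_distrib]
    rfl
  rw [hsum, digamma_nat hx n]
  ring

lemma hasSum_aa {x : ℝ} (hx : 0 < x) : HasSum (aa x) (Real.log x - digamma x) := by
  rw [hasSum_iff_tendsto_nat_of_nonneg (aa_nonneg hx)]
  have he : Tendsto (fun n : ℕ => Real.log (x + n) - digamma (x + n)) atTop (𝓝 0) := by
    apply tendsto_of_tendsto_of_tendsto_of_le_of_le' (g := fun _ : ℕ => (0:ℝ))
      (h := fun n : ℕ => ((x - 1) + (n:ℝ))⁻¹) tendsto_const_nhds
    · apply Tendsto.inv_tendsto_atTop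
      exact tendsto_atTop_add_const_left atTop (x - 1) tendsto_natCast_atTop_atTop
    · filter_upwards with n
      have : (0:ℝ) < x + n := by positivity
      linarith [digamma_le_log this]
    · filter_upwards [eventually_ge_atTop 1] with n hn
      have h1 : (1:ℝ) ≤ (n:ℝ) := by exact_mod_cast hn
      have ht : 0 < x + n - 1 := by linarith
      have h2 : Real.log x ≤ digamma (x + 1) := log_le_digamma_add_one hx
      have h3 : Real.log (x + n - 1) ≤ digamma (x + n) := by
        have := log_le_digamma_add_one ht
        rw [show x + n - 1 + 1 = x + n by ring] at this
        exact this
      have h4 := log_succ_sub_le ht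
      rw [show x + n - 1 + 1 = x + n by ring] at h4
      have h5 : x + n - 1 = (x - 1) + n := by ring
      rw [h5] at h4 h3
      linarith
  have := (tendsto_const_nhds (x := Real.log x - digamma x) (f := atTop)).sub he
  rw [sub_zero] at this
  apply this.congr
  intro n
  rw [partial_aa hx n]

lemma digamma_eq {x : ℝ} (hx : 0 < x) :
    digamma x = Real.log x - ∑' k, aa x k := by
  rw [(hasSum_aa hx).tsum_eq]; ring

lemma hasSum_TT {x : ℝ} (hx : 0 < x) :
    HasSum (fun k : ℕ => ((x + k) ^ 2)⁻¹) (TT x) := (summable_sq hx).hasSum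

lemma hasSum_inv_sub {x : ℝ} (hx : 0 < x) :
    HasSum (fun k : ℕ => (x + k)⁻¹ - (x + k + 1)⁻¹) x⁻¹ := by
  rw [hasSum_iff_tendsto_nat_of_nonneg]
  · have hp : ∀ n : ℕ, ∑ k ∈ range n, ((x + k)⁻¹ - (x + k + 1)⁻¹) = x⁻¹ - (x + n)⁻¹ := by
      intro n
      have h := Finset.sum_range_sub' (f := fun k : ℕ => (x + k)⁻¹) n
      calc ∑ k ∈ range n, ((x + k)⁻¹ - (x + k + 1)⁻¹)
          = ∑ k ∈ range n, ((x + k)⁻¹ - (x + ((k:ℕ) + 1 : ℕ))⁻¹) := by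
            apply Finset.sum_congr rfl
            intro k _
            have hc : x + ((k : ℕ) + 1 : ℕ) = x + k + 1 := by push_cast; ring
            rw [hc]
        _ = (x + (0:ℕ))⁻¹ - (x + (n:ℕ))⁻¹ := h
        _ = x⁻¹ - (x + n)⁻¹ := by norm_num
    have ht : Tendsto (fun n : ℕ => x⁻¹ - (x + n)⁻¹) atTop (𝓝 (x⁻¹ - 0)) := by
      apply tendsto_const_nhds.sub
      apply Tendsto.inv_tendsto_atTop
      exact tendsto_atTop_add_const_left atTop x tendsto_natCast_atTop_atTop
    rw [sub_zero] at ht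
    exact ht.congr fun n => (hp n).symm
  · intro k
    have h1 : (0:ℝ) < x + k := by positivity
    have := inv_anti₀ h1 (by linarith : x + k ≤ x + k + 1)
    linarith


lemma TT_rec {x : ℝ} (hx : 0 < x) : TT x = (x ^ 2)⁻¹ + TT (x + 1) := by
  have h := Summable.tsum_eq_zero_add (summable_sq hx)
  simp only [TT]
  rw [h]
  norm_num
  congr 1
  funext k
  congr 2
  ring

lemma inv_diff_le {t : ℝ} (ht : 0 < t) : t⁻¹ - (t + 1)⁻¹ ≤ (t ^ 2)⁻¹ := by
  rw [inv_sub_inv ht.ne' (by positivity), div_le_iff₀ (by positivity)]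
  rw [show t + 1 - t = 1 by ring]
  rw [inv_mul_eq_div, le_div_iff₀ (by positivity : (0:ℝ) < t^2)]
  nlinarith

lemma hasDerivAt_aa (k : ℕ) {y : ℝ} (hy : 0 < y) :
    HasDerivAt (fun z => aa z k) ((y + k)⁻¹ - (y + k + 1)⁻¹ - ((y + k) ^ 2)⁻¹) y := by
  have h0 : (0:ℝ) < y + k := by positivity
  have h1 : (0:ℝ) < y + k + 1 := by positivity
  have hid : HasDerivAt (fun z : ℝ => z + (k:ℝ)) 1 y := (hasDerivAt_id y).add_const _
  have hid1 : HasDerivAt (fun z : ℝ => z + (k:ℝ) + 1) 1 y := hid.add_const _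
  have hinv : HasDerivAt (fun z : ℝ => (z + (k:ℝ))⁻¹) (-1 / (y + k) ^ 2) y := hid.inv h0.ne'
  have hlog1 : HasDerivAt (fun z : ℝ => Real.log (z + k + 1)) (1 / (y + k + 1)) y :=
    hid1.log h1.ne'
  have hlog0 : HasDerivAt (fun z : ℝ => Real.log (z + k)) (1 / (y + k)) y := hid.log h0.ne'
  have := hinv.sub (hlog1.sub hlog0)
  convert this using 1
  all_goals try rfl
  field_simp
  ring

lemma hasDerivAt_sum_aa {x : ℝ} (hx : 0 < x) :
    HasDerivAt (fun y => ∑' k, aa y k) (x⁻¹ - TT x) x := by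
  have hx2 : 0 < x / 2 := half_pos hx
  have key := hasDerivAt_tsum_of_isPreconnected
    (u := fun k : ℕ => 2 * ((x / 2 + k) ^ 2)⁻¹)
    ((summable_sq hx2).mul_left 2) (isOpen_Ioi (a := x / 2)) (isPreconnected_Ioi)
    (g := fun k y => aa y k)
    (g' := fun k y => (y + k)⁻¹ - (y + k + 1)⁻¹ - ((y + k) ^ 2)⁻¹)
    (fun k y hy => hasDerivAt_aa k (hx2.trans hy))
    ?_ (mem_Ioi.mpr (half_lt_self hx)) (summable_aa hx) (mem_Ioi.mpr (half_lt_self hx))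
  · have hval : ∑' k : ℕ, ((x + k)⁻¹ - (x + k + 1)⁻¹ - ((x + k) ^ 2)⁻¹) = x⁻¹ - TT x :=
      ((hasSum_inv_sub hx).sub (hasSum_TT hx)).tsum_eq
    rwa [hval] at key
  · intro k y hy
    have hy0 : 0 < y := hx2.trans hy
    have h0 : (0:ℝ) < y + k := by positivity
    have hA0 : 0 ≤ (y + k)⁻¹ - (y + k + 1)⁻¹ := by
      have := inv_anti₀ h0 (by linarith : y + k ≤ y + k + 1)
      linarith
    have hA1 : (y + k)⁻¹ - (y + k + 1)⁻¹ ≤ ((y + k) ^ 2)⁻¹ := inv_diff_le h0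
    have hB : ((y + k) ^ 2)⁻¹ ≤ ((x / 2 + k) ^ 2)⁻¹ := by
      apply inv_anti₀ (by positivity)
      apply pow_le_pow_left₀ (by positivity)
      have := le_of_lt (mem_Ioi.mp hy)
      linarith
    rw [Real.norm_eq_abs, abs_le]
    constructor <;> nlinarith [inv_nonneg.mpr (le_of_lt (by positivity : (0:ℝ) < (x/2+k)^2))]

lemma hasDerivAt_DD {x : ℝ} (hx : 0 < x) :
    HasDerivAt (fun y => Real.log y - ∑' k, aa y k) (TT x) x := by
  have := (Real.hasDerivAt_log hx.ne').sub (hasDerivAt_sum_aa hx)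
  convert this using 1
  all_goals try rfl
  ring

lemma log_ineq {a : ℝ} (ha : 1 < a) :
    (a ^ 2)⁻¹ < 2 * Real.log a - Real.log (a - 1) - Real.log (a + 1) := by
  have h0 : (0:ℝ) < a := by linarith
  have hu1 : (a ^ 2)⁻¹ < 1 := by
    rw [inv_lt_one_iff₀]; right; nlinarith
  have hu0 : 0 < (a ^ 2)⁻¹ := by positivity
  have hmul : Real.log (a - 1) + Real.log (a + 1) = Real.log (a^2) + Real.log (1 - (a^2)⁻¹) := by
    rw [← Real.log_mul (by nlinarith) (by nlinarith), ← Real.log_mul (by positivity) (by linarith)]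
    congr 1
    field_simp
    ring
  have hexp : Real.log (1 - (a^2)⁻¹) < -(a^2)⁻¹ := by
    rw [Real.log_lt_iff_lt_exp (by linarith)]
    have := Real.add_one_lt_exp (x := -(a^2)⁻¹) (neg_ne_zero.mpr hu0.ne')
    linarith
  have hsq : Real.log (a^2) = 2 * Real.log a := by
    rw [Real.log_pow]; push_cast; ring
  linarith

lemma TT_lt {x : ℝ} (hx : 0 < x) : TT (x + 1) < Real.log (x + 1) - Real.log x := by
  set c : ℕ → ℝ := fun k => Real.log (x + k + 1) - Real.log (x + k) with hc
  have hterm : ∀ k : ℕ, ((x + 1 + k) ^ 2)⁻¹ < c k - c (k + 1) := by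
    intro k
    have ha : (1:ℝ) < x + k + 1 := by have : (0:ℝ) ≤ k := k.cast_nonneg; linarith
    have h := log_ineq ha
    rw [show x + (k:ℝ) + 1 - 1 = x + k by ring] at h
    have e1 : x + ((k:ℕ) + 1 : ℕ) + 1 = x + (k:ℝ) + 1 + 1 := by push_cast; ring
    have e2 : x + ((k:ℕ) + 1 : ℕ) = x + (k:ℝ) + 1 := by push_cast; ring
    have e3 : x + 1 + (k:ℝ) = x + (k:ℝ) + 1 := by ring
    simp only [hc, e1, e2, e3]
    linarith
  have hnonneg : ∀ k : ℕ, 0 ≤ c k - c (k + 1) := fun k =>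
    le_of_lt ((by positivity : (0:ℝ) < ((x + 1 + k) ^ 2)⁻¹).trans (hterm k))
  have hcs : HasSum (fun k => c k - c (k + 1)) (Real.log (x + 1) - Real.log x) := by
    rw [hasSum_iff_tendsto_nat_of_nonneg hnonneg]
    have hp : ∀ n : ℕ, ∑ k ∈ range n, (c k - c (k + 1)) = c 0 - c n :=
      fun n => Finset.sum_range_sub' c n
    have hc0 : c 0 = Real.log (x + 1) - Real.log x := by simp [hc]
    have hcn : Tendsto (fun n : ℕ => c n) atTop (𝓝 0) := by
      apply tendsto_of_tendsto_of_tendsto_of_le_of_le' (g := fun _ : ℕ => (0:ℝ))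
        (h := fun n : ℕ => (x + (n:ℝ))⁻¹) tendsto_const_nhds
      · apply Tendsto.inv_tendsto_atTop
        exact tendsto_atTop_add_const_left atTop x tendsto_natCast_atTop_atTop
      · filter_upwards with n
        have h0 : (0:ℝ) < x + n := by positivity
        have := Real.log_le_log (by positivity) (by linarith : x + (n:ℝ) ≤ x + n + 1)
        simp only [hc]
        linarith
      · filter_upwards with n
        exact log_succ_sub_le (by positivity : (0:ℝ) < x + (n:ℝ))
    have := (tendsto_const_nhds (x := c 0) (f := atTop)).sub hcn
    rw [sub_zero] at this
    rw [← hc0]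
    exact this.congr fun n => (hp n).symm
  have h1 : TT (x + 1) = ∑' k : ℕ, ((x + 1 + k) ^ 2)⁻¹ := rfl
  rw [h1, ← hcs.tsum_eq]
  exact Summable.tsum_lt_tsum_of_nonneg (i := 0) (fun k => by positivity)
    (fun k => le_of_lt (hterm k)) (hterm 0) hcs.summable

lemma hasDerivAt_main {x : ℝ} (hx : 0 < x) :
    HasDerivAt (fun x : ℝ => ((x + 1) * (Real.log (x + 1) - digamma (x + 1)) -
      x * (Real.log x - digamma x))) (Real.log (x + 1) - Real.log x - TT (x + 1)) x := by
  have h1 : (0:ℝ) < x + 1 := by linarith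
  set DD : ℝ → ℝ := fun y => Real.log y - ∑' k, aa y k with hDDdef
  have hDD : HasDerivAt DD (TT x) x := hasDerivAt_DD hx
  have hDD1 : HasDerivAt (fun y => DD (y + 1)) (TT (x + 1)) x := by
    have := (hasDerivAt_DD h1).comp x ((hasDerivAt_id x).add_const 1)
    convert this using 1 <;> try rfl
    ring
  have hlog1 : HasDerivAt (fun y : ℝ => Real.log (y + 1)) ((x + 1)⁻¹) x := by
    have := ((hasDerivAt_id x).add_const 1).log h1.ne'
    simpa using this
  have hterm1 : HasDerivAt (fun y : ℝ => (y + 1) * (Real.log (y + 1) - DD (y + 1)))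
      (1 * (Real.log (x + 1) - DD (x + 1)) + (x + 1) * ((x + 1)⁻¹ - TT (x + 1))) x :=
    ((hasDerivAt_id x).add_const 1).mul (hlog1.sub hDD1)
  have hterm0 : HasDerivAt (fun y : ℝ => y * (Real.log y - DD y))
      (1 * (Real.log x - DD x) + x * (x⁻¹ - TT x)) x :=
    (hasDerivAt_id x).mul ((Real.hasDerivAt_log hx.ne').sub hDD)
  have hF := hterm1.sub hterm0
  have heq : (fun x : ℝ => ((x + 1) * (Real.log (x + 1) - digamma (x + 1)) -
      x * (Real.log x - digamma x))) =ᶠ[𝓝 x]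
      (fun y : ℝ => (y + 1) * (Real.log (y + 1) - DD (y + 1)) - y * (Real.log y - DD y)) := by
    filter_upwards [eventually_gt_nhds hx] with y hy
    rw [digamma_eq hy, digamma_eq (by linarith : (0:ℝ) < y + 1)]
  have hG := hF.congr_of_eventuallyEq heq
  convert hG using 1
  all_goals try rfl
  have hDrec : DD (x + 1) = DD x + x⁻¹ := by
    simp only [hDDdef]
    rw [← digamma_eq h1, ← digamma_eq hx]
    exact digamma_add_one hx
  rw [hDrec, TT_rec hx]
  field_simp
  ring

lemma deriv_digamma_eq {x : ℝ} (hx : 0 < x) : deriv digamma (x + 1) = TT (x + 1) := by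
  have h1 : (0:ℝ) < x + 1 := by linarith
  have heq : digamma =ᶠ[𝓝 (x+1)] (fun y => Real.log y - ∑' k, aa y k) := by
    filter_upwards [eventually_gt_nhds h1] with y hy
    exact digamma_eq hy
  rw [heq.deriv_eq, (hasDerivAt_DD h1).deriv]

end ThetaAux

open ThetaAux in
theorem theta_diff_strictMono :
    StrictMonoOn (fun x : ℝ => ((x + 1) * (Real.log (x + 1) - digamma (x + 1)) -
      x * (Real.log x - digamma x))) (Set.Ioi 0) ∧
    ∀ x : ℝ, 0 < x →
      deriv (fun x : ℝ => ((x + 1) * (Real.log (x + 1) - digamma (x + 1)) -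
        x * (Real.log x - digamma x))) x =
        Real.log (x + 1) - Real.log x - deriv digamma (x + 1) := by
  constructor
  · apply strictMonoOn_of_deriv_pos (convex_Ioi 0)
    · exact fun y hy => ((hasDerivAt_main hy).continuousAt).continuousWithinAt
    · intro y hy
      rw [interior_Ioi] at hy
      rw [(hasDerivAt_main hy).deriv]
      have := TT_lt hy
      linarith
  · intro x hx
    rw [(hasDerivAt_main hx).deriv, deriv_digamma_eq hx]
end

section
/- For all real x > 0, log(x+1) - log x - ψ'(x+1) > 0, where ψ' is the trigamma function. -/
open Real Filter

section Aux

open Set Topology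

/-- Derivatives of convex functions converge to the derivative of the pointwise limit. -/
lemma aux_tendsto_deriv_of_convexOn {g : ℕ → ℝ → ℝ} {f : ℝ → ℝ} {d : ℕ → ℝ} {c y : ℝ}
    (hy : 0 < y)
    (hconv : ∀ n, ConvexOn ℝ (Set.Ioi 0) (g n))
    (hder : ∀ n, HasDerivAt (g n) (d n) y)
    (hlim : ∀ z, 0 < z → Tendsto (fun n => g n z) atTop (𝓝 (f z)))
    (hf : HasDerivAt f c y) : Tendsto d atTop (𝓝 c) := by
  have hslope : Tendsto (slope f y) (𝓝[≠] y) (𝓝 c) :=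
    hasDerivAt_iff_tendsto_slope.mp hf
  rw [tendsto_order]
  constructor
  · intro b hb
    have h1 : ∀ᶠ z in 𝓝[<] y, b < slope f y z :=
      (hslope.mono_left (nhdsWithin_mono _ (fun z hz => ne_of_lt hz))).eventually
        (lt_mem_nhds hb)
    have h2 : ∀ᶠ z in 𝓝[<] y, z ∈ Ioo 0 y := by
      filter_upwards [eventually_mem_nhdsWithin,
        (eventually_gt_nhds hy).filter_mono nhdsWithin_le_nhds] with z h1' h2'
      exact ⟨h2', h1'⟩
    obtain ⟨z₂, hbz₂, h0z₂, hz₂y⟩ := (h1.and h2).exists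
    have key : ∀ n, slope (g n) z₂ y ≤ d n := fun n =>
      (hconv n).slope_le_of_hasDerivAt (mem_Ioi.2 h0z₂) (mem_Ioi.2 hy) hz₂y (hder n)
    have hconvslope : Tendsto (fun n => slope (g n) z₂ y) atTop (𝓝 (slope f y z₂)) := by
      have h := ((hlim y hy).sub (hlim z₂ h0z₂)).div_const (y - z₂)
      have heq : slope f y z₂ = (f y - f z₂) / (y - z₂) := by
        rw [slope_def_field, ← neg_sub (f y), ← neg_sub y, neg_div_neg_eq]
      rw [heq]
      refine h.congr fun n => ?_
      rw [slope_def_field]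
    filter_upwards [hconvslope.eventually_const_lt hbz₂] with n hn
    exact hn.trans_le (key n)
  · intro b hb
    have h1 : ∀ᶠ z in 𝓝[>] y, slope f y z < b :=
      (hslope.mono_left (nhdsWithin_mono _ (fun z hz => ne_of_gt hz))).eventually
        (gt_mem_nhds hb)
    have h2 : ∀ᶠ z in 𝓝[>] y, y < z := eventually_mem_nhdsWithin
    obtain ⟨z₁, hbz₁, hyz₁⟩ := (h1.and h2).exists
    have key : ∀ n, d n ≤ slope (g n) y z₁ := fun n =>
      (hconv n).le_slope_of_hasDerivAt (mem_Ioi.2 hy) (mem_Ioi.2 (hy.trans hyz₁)) hyz₁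
        (hder n)
    have hconvslope : Tendsto (fun n => slope (g n) y z₁) atTop (𝓝 (slope f y z₁)) := by
      have h := ((hlim z₁ (hy.trans hyz₁)).sub (hlim y hy)).div_const (z₁ - y)
      rw [slope_def_field]
      refine h.congr fun n => ?_
      rw [slope_def_field]
    filter_upwards [hconvslope.eventually_lt_const hbz₁] with n hn
    exact (key n).trans_lt hn

/-- `Real.Gamma` is real-analytic at positive points. -/
lemma aux_analyticAt_Gamma {y : ℝ} (hy : 0 < y) : AnalyticAt ℝ Real.Gamma y := by
  have hopen : IsOpen {z : ℂ | 0 < z.re} := isOpen_lt continuous_const Complex.continuous_re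
  have hGC : AnalyticOnNhd ℂ Complex.Gamma {z : ℂ | 0 < z.re} := by
    refine DifferentiableOn.analyticOnNhd (fun z hz => ?_) hopen
    refine (Complex.differentiableAt_Gamma z fun m => ?_).differentiableWithinAt
    intro h
    rw [h] at hz
    simp only [Set.mem_setOf_eq, Complex.neg_re, Complex.natCast_re] at hz
    have : (0:ℝ) ≤ m := Nat.cast_nonneg m
    linarith
  have h1 : AnalyticAt ℂ Complex.Gamma (y : ℂ) := hGC _ (by simpa using hy)
  have h2 : AnalyticAt ℝ (fun t : ℝ => (Complex.Gamma (t : ℂ)).re) y := by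
    exact (Complex.reCLM.analyticAt _).comp
      ((h1.restrictScalars).comp (Complex.ofRealCLM.analyticAt y))
  refine h2.congr (Filter.Eventually.of_forall fun t => ?_)
  show (Complex.Gamma (t:ℂ)).re = Real.Gamma t
  rw [Complex.Gamma_ofReal, Complex.ofReal_re]

lemma aux_Gamma_ne_neg_nat {w : ℝ} (hw : 0 < w) : ∀ m : ℕ, w ≠ -m := fun m h => by
  have : (0:ℝ) ≤ m := Nat.cast_nonneg m
  rw [h] at hw; linarith

/-- digamma is analytic at positive points. -/
lemma aux_analyticAt_digamma {y : ℝ} (hy : 0 < y) : AnalyticAt ℝ digamma y := by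
  have hG : AnalyticOnNhd ℝ Real.Gamma (Set.Ioi 0) := fun t ht => aux_analyticAt_Gamma ht
  have hG' : AnalyticOnNhd ℝ (deriv Real.Gamma) (Set.Ioi 0) := hG.deriv
  exact (hG' y hy).div (hG y hy) (Real.Gamma_pos_of_pos hy).ne'

/-- log ∘ Γ has derivative digamma. -/
lemma aux_hasDerivAt_logGamma {w : ℝ} (hw : 0 < w) :
    HasDerivAt (fun t => Real.log (Real.Gamma t)) (digamma w) w := by
  have hd : DifferentiableAt ℝ Real.Gamma w :=
    Real.differentiableAt_Gamma (aux_Gamma_ne_neg_nat hw)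
  exact hd.hasDerivAt.log (Real.Gamma_pos_of_pos hw).ne'

end Aux

section Aux2
open Set Topology

lemma aux_convex_neg_log (m : ℕ) :
    ConvexOn ℝ (Set.Ioi 0) (fun z : ℝ => -Real.log (z + m)) := by
  have h1 : ConvexOn ℝ (Set.Ioi 0) (fun z : ℝ => -Real.log z) :=
    strictConcaveOn_log_Ioi.concaveOn.neg
  have h2 := h1.translate_right (m : ℝ)
  have heq : (fun z : ℝ => -Real.log (z + m)) =
      ((fun z : ℝ => -Real.log z) ∘ fun z => (m : ℝ) + z) := by
    funext z; simp [add_comm]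
  rw [heq]
  refine h2.subset (fun z hz => ?_) (convex_Ioi 0)
  simp only [Set.mem_preimage, Set.mem_Ioi] at *
  positivity

lemma aux_convex_inv (m : ℕ) :
    ConvexOn ℝ (Set.Ioi 0) (fun z : ℝ => (z + m)⁻¹) := by
  have h1 : ConvexOn ℝ (Set.Ioi 0) (fun z : ℝ => z⁻¹) := by
    have := (strictConvexOn_zpow (m := -1) (by decide) (by decide)).convexOn
    simpa [zpow_neg_one] using this
  have h2 := h1.translate_right (m : ℝ)
  have heq : (fun z : ℝ => (z + m)⁻¹) =
      ((fun z : ℝ => z⁻¹) ∘ fun z => (m : ℝ) + z) := by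
    funext z; simp [add_comm]
  rw [heq]
  refine h2.subset (fun z hz => ?_) (convex_Ioi 0)
  simp only [Set.mem_preimage, Set.mem_Ioi] at *
  positivity

lemma aux_convexOn_logGammaSeq (n : ℕ) :
    ConvexOn ℝ (Set.Ioi 0) (fun z : ℝ =>
      z * Real.log n + Real.log (Nat.factorial n) - ∑ m ∈ Finset.range (n+1), Real.log (z + m)) := by
  have haff : ConvexOn ℝ (Set.Ioi 0) (fun z : ℝ => z * Real.log n + Real.log (Nat.factorial n)) := by
    refine ⟨convex_Ioi 0, fun a _ b _ p q hp hq hpq => le_of_eq ?_⟩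
    simp only [smul_eq_mul]
    linear_combination (-Real.log (Nat.factorial n)) * hpq
  have hsum : ∀ k : ℕ, ConvexOn ℝ (Set.Ioi 0)
      (fun z : ℝ => ∑ m ∈ Finset.range k, -Real.log (z + m)) := by
    intro k
    induction k with
    | zero => simpa using convexOn_const (0:ℝ) (convex_Ioi 0)
    | succ k ih =>
      simp only [Finset.sum_range_succ]
      exact ih.add (aux_convex_neg_log k)
  have h := haff.add (hsum (n+1))
  simp only [sub_eq_add_neg, ← Finset.sum_neg_distrib]
  exact h

lemma aux_convexOn_invSeq (n : ℕ) :
    ConvexOn ℝ (Set.Ioi 0) (fun z : ℝ =>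
      (∑ m ∈ Finset.range (n+1), (z + m)⁻¹) - Real.log n) := by
  have hsum : ∀ k : ℕ, ConvexOn ℝ (Set.Ioi 0)
      (fun z : ℝ => ∑ m ∈ Finset.range k, (z + m)⁻¹) := by
    intro k
    induction k with
    | zero => simpa using convexOn_const (0:ℝ) (convex_Ioi 0)
    | succ k ih =>
      simp only [Finset.sum_range_succ]
      exact ih.add (aux_convex_inv k)
  simp only [sub_eq_add_neg]
  exact (hsum (n+1)).add (convexOn_const _ (convex_Ioi 0))

lemma aux_hasDerivAt_logGammaSeq (n : ℕ) {z : ℝ} (hz : 0 < z) :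
    HasDerivAt (fun w : ℝ =>
        w * Real.log n + Real.log (Nat.factorial n) - ∑ m ∈ Finset.range (n+1), Real.log (w + m))
      (Real.log n - ∑ m ∈ Finset.range (n+1), (z + m)⁻¹) z := by
  have h1 : HasDerivAt (fun w : ℝ => w * Real.log n + Real.log (Nat.factorial n)) (Real.log n) z := by
    simpa using ((hasDerivAt_id z).mul_const (Real.log n)).add_const (Real.log (Nat.factorial n))
  have h2 : HasDerivAt (fun w : ℝ => ∑ m ∈ Finset.range (n+1), Real.log (w + m))
      (∑ m ∈ Finset.range (n+1), (z + m)⁻¹) z := by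
    apply HasDerivAt.fun_sum
    intro m _
    have h : HasDerivAt (fun w : ℝ => w + (m:ℝ)) 1 z := (hasDerivAt_id z).add_const _
    simpa [one_div] using h.log (by positivity)
  exact h1.sub h2

lemma aux_hasDerivAt_invSeq (n : ℕ) {y : ℝ} (hy : 0 < y) :
    HasDerivAt (fun w : ℝ => (∑ m ∈ Finset.range (n+1), (w + m)⁻¹) - Real.log n)
      (-∑ m ∈ Finset.range (n+1), ((y + m)^2)⁻¹) y := by
  have h2 : HasDerivAt (fun w : ℝ => ∑ m ∈ Finset.range (n+1), (w + m)⁻¹)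
      (∑ m ∈ Finset.range (n+1), -((y + m)^2)⁻¹) y := by
    apply HasDerivAt.fun_sum
    intro m _
    have h : HasDerivAt (fun w : ℝ => w + (m:ℝ)) 1 y := (hasDerivAt_id y).add_const _
    simpa [neg_div, one_div] using h.fun_inv (by positivity)
  simpa [Finset.sum_neg_distrib] using h2.sub_const (Real.log n)

lemma aux_digamma_series {z : ℝ} (hz : 0 < z) :
    Tendsto (fun n : ℕ => Real.log n - ∑ m ∈ Finset.range (n+1), (z + m)⁻¹) atTop
      (𝓝 (digamma z)) := by
  refine aux_tendsto_deriv_of_convexOn hz (fun n => aux_convexOn_logGammaSeq n)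
    (fun n => aux_hasDerivAt_logGammaSeq n hz) (fun w hw => ?_) (aux_hasDerivAt_logGamma hz)
  exact Real.BohrMollerup.tendsto_log_gamma hw

lemma aux_trigamma_tendsto {y : ℝ} (hy : 0 < y) :
    Tendsto (fun n : ℕ => ∑ m ∈ Finset.range (n+1), ((y + m)^2)⁻¹) atTop
      (𝓝 (deriv digamma y)) := by
  have hdig : HasDerivAt digamma (deriv digamma y) y :=
    ((aux_analyticAt_digamma hy).differentiableAt).hasDerivAt
  have h := aux_tendsto_deriv_of_convexOn (f := fun w => -digamma w) hy
    (fun n => aux_convexOn_invSeq n) (fun n => aux_hasDerivAt_invSeq n hy)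
    (fun w hw => by simpa [neg_sub] using (aux_digamma_series hw).neg) hdig.neg
  simpa using h.neg

end Aux2

section Aux3
open Set Topology

lemma aux_sum_le (x : ℝ) (hx : 0 < x) (n : ℕ) :
    ∑ m ∈ Finset.range (n+1), (((x+1) + m)^2)⁻¹ ≤ (x + 1/2)⁻¹ := by
  set f : ℕ → ℝ := fun m => (x + m + 1/2)⁻¹ with hf
  have key : ∀ m ∈ Finset.range (n+1), (((x+1) + m)^2)⁻¹ ≤ f m - f (m+1) := by
    intro m _
    have h1 : (0:ℝ) < x + m + 1/2 := by positivity
    have h2 : (0:ℝ) < x + (m+1:ℕ) + 1/2 := by positivity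
    rw [hf]
    rw [inv_sub_inv h1.ne' h2.ne']
    have h3 : x + ((m+1:ℕ):ℝ) + 1/2 - (x + m + 1/2) = 1 := by push_cast; ring
    rw [h3, inv_eq_one_div, div_le_div_iff₀ (by positivity) (by positivity)]
    push_cast
    nlinarith [sq_nonneg (x + 1 + (m:ℝ))]
  calc ∑ m ∈ Finset.range (n+1), (((x+1) + m)^2)⁻¹
      ≤ ∑ m ∈ Finset.range (n+1), (f m - f (m+1)) := Finset.sum_le_sum key
    _ = f 0 - f (n+1) := Finset.sum_range_sub' f (n+1)
    _ ≤ f 0 := by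
        have : (0:ℝ) ≤ f (n+1) := by rw [hf]; positivity
        linarith
    _ = (x + 1/2)⁻¹ := by rw [hf]; norm_num

lemma aux_log_gt (x : ℝ) (hx : 0 < x) : (x + 1/2)⁻¹ < Real.log (x+1) - Real.log x := by
  set F : ℝ → ℝ := fun t => Real.log (t+1) - Real.log t - (t + 1/2)⁻¹ with hF
  have hderiv : ∀ t : ℝ, 0 < t →
      HasDerivAt F ((1/(t+1) - 1/t) - (-1/(t+1/2)^2)) t := by
    intro t ht
    have ha : HasDerivAt (fun s : ℝ => Real.log (s+1)) (1/(t+1)) t := by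
      simpa using ((hasDerivAt_id t).add_const (1:ℝ)).log (by positivity)
    have hb : HasDerivAt Real.log (1/t) t := by
      simpa [one_div] using Real.hasDerivAt_log ht.ne'
    have hc : HasDerivAt (fun s : ℝ => (s + 1/2)⁻¹) (-1/(t+1/2)^2) t := by
      simpa using ((hasDerivAt_id t).add_const (1/2:ℝ)).fun_inv (by positivity)
    exact (ha.sub hb).sub hc
  have hanti : StrictAntiOn F (Set.Ioi 0) := by
    apply strictAntiOn_of_deriv_neg (convex_Ioi 0)
    · exact fun t ht => (hderiv t ht).continuousAt.continuousWithinAt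
    · intro t ht
      rw [interior_Ioi] at ht
      have ht0 : (0:ℝ) < t := ht
      have hne0 : t ≠ 0 := ht0.ne'
      have hne1 : t + 1 ≠ 0 := by positivity
      have hne2 : t + 1/2 ≠ 0 := by positivity
      rw [(hderiv t ht).deriv]
      have h2 : 1/(t+1/2)^2 < 1/(t*(t+1)) := by
        rw [div_lt_div_iff₀ (by positivity) (by positivity)]
        nlinarith
      have e : 1/(t+1) - 1/t - (-1/(t+1/2)^2) = 1/(t+1/2)^2 - 1/(t*(t+1)) := by
        field_simp
        ring
      rw [e]
      linarith
  have hlim : Tendsto F atTop (𝓝 0) := by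
    have h1 : Tendsto (fun t : ℝ => Real.log (t+1) - Real.log t) atTop (𝓝 0) := by
      have h3 : Tendsto (fun t : ℝ => (t+1)/t) atTop (𝓝 1) := by
        have heq : (fun t : ℝ => (t+1)/t) =ᶠ[atTop] fun t => 1 + t⁻¹ := by
          filter_upwards [eventually_gt_atTop (0:ℝ)] with t ht
          field_simp
        rw [tendsto_congr' heq]
        have h := Tendsto.add
          (tendsto_const_nhds : Tendsto (fun _ : ℝ => (1:ℝ)) atTop (𝓝 1))
          tendsto_inv_atTop_zero
        simpa using h
      have h2 := (Real.continuousAt_log one_ne_zero).tendsto.comp h3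
      simp only [Function.comp_def, Real.log_one] at h2
      refine h2.congr' ?_
      filter_upwards [eventually_gt_atTop (0:ℝ)] with t ht
      rw [Real.log_div (by positivity) ht.ne']
    have h4 : Tendsto (fun t : ℝ => (t + 1/2)⁻¹) atTop (𝓝 0) :=
      tendsto_inv_atTop_zero.comp (tendsto_atTop_add_const_right _ _ tendsto_id)
    have h9 := h1.sub h4
    rw [show (0:ℝ) - 0 = 0 by norm_num] at h9
    exact h9
  have h5 : ∀ᶠ y in atTop, F y ≤ F (x+1) := by
    filter_upwards [eventually_ge_atTop (x+1)] with y hy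
    rcases eq_or_lt_of_le hy with h | h
    · rw [← h]
    · exact (hanti (by simp; linarith) (by simp; linarith) h).le
  have h6 : (0:ℝ) ≤ F (x+1) := le_of_tendsto hlim h5
  have h7 : F (x+1) < F x := hanti (by simpa using hx) (by simp; linarith) (lt_add_one x)
  have h8 : 0 < F x := lt_of_le_of_lt h6 h7
  rw [hF] at h8
  simp only at h8
  linarith

end Aux3

theorem log_succ_sub_log_sub_trigamma_pos (x : ℝ) (hx : 0 < x) :
    Real.log (x + 1) - Real.log x - deriv digamma (x + 1) > 0 := by
  have h1 : deriv digamma (x+1) ≤ (x + 1/2)⁻¹ :=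
    le_of_tendsto (aux_trigamma_tendsto (y := x+1) (by linarith))
      (Filter.Eventually.of_forall fun n => aux_sum_le x hx n)
  have h2 := aux_log_gt x hx
  linarith
end

section
/- The function θ₁(x+1) - θ₁(x), where θ₁(x) = x(log x - ψ(x)), tends to 0 as x → ∞, and satisfies the bounds (x+1)log(1 + 1/x) - 1/(2x) - 1 < θ₁(x+1) - θ₁(x) < (x+1)log(1 + 1/x) - 1/(2x) + 1/(12x²) - 1 for all x > 0. -/
open Real Filter Finset Topology

namespace ThetaAux

noncomputable def ft (t : ℝ) : ℝ := 1 / t + Real.log t - Real.log (t + 1)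

noncomputable def tA (t : ℝ) : ℝ := 1 / (2 * t) - 1 / (2 * (t + 1))

noncomputable def tB (t : ℝ) : ℝ :=
  1 / (2 * t) - 1 / (2 * (t + 1)) + (1 / (12 * t ^ 2) - 1 / (12 * (t + 1) ^ 2))

lemma hd_inv_lin {a b : ℝ} {t : ℝ} (h : a * t + b ≠ 0) :
    HasDerivAt (fun y : ℝ => 1 / (a * y + b)) (-(a / (a * t + b) ^ 2)) t := by
  have h0 : HasDerivAt (fun y : ℝ => a * y + b) a t := by
    simpa using ((hasDerivAt_id t).const_mul a).add_const b
  have h1 : HasDerivAt (fun y : ℝ => (a * y + b)⁻¹) (-a / (a * t + b) ^ 2) t := h0.fun_inv h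
  have e : (fun y : ℝ => 1 / (a * y + b)) = fun y : ℝ => (a * y + b)⁻¹ := by
    funext y; rw [one_div]
  rw [e]
  convert h1 using 1
  ring

lemma hd_inv_quad {a : ℝ} {t : ℝ} (ha : a ≠ 0) (h : t ≠ 0) :
    HasDerivAt (fun y : ℝ => 1 / (a * y ^ 2)) (-(2 / (a * t ^ 3))) t := by
  have h0 : HasDerivAt (fun y : ℝ => a * y ^ 2) (a * (2 * t)) t := by
    simpa using (hasDerivAt_pow 2 t).const_mul a
  have h1 : HasDerivAt (fun y : ℝ => (a * y ^ 2)⁻¹) (-(a * (2 * t)) / (a * t ^ 2) ^ 2) t :=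
    h0.fun_inv (by simp [ha, pow_ne_zero, h])
  have e : (fun y : ℝ => 1 / (a * y ^ 2)) = fun y : ℝ => (a * y ^ 2)⁻¹ := by
    funext y; rw [one_div]
  rw [e]
  convert h1 using 1
  field_simp

lemma hd_inv_quad' {a : ℝ} {t : ℝ} (ha : a ≠ 0) (h : t + 1 ≠ 0) :
    HasDerivAt (fun y : ℝ => 1 / (a * (y + 1) ^ 2)) (-(2 / (a * (t + 1) ^ 3))) t := by
  have h0 : HasDerivAt (fun y : ℝ => a * (y + 1) ^ 2) (a * (2 * (t + 1))) t := by
    have := ((hasDerivAt_pow 2 (t + 1)).comp t ((hasDerivAt_id t).add_const 1)).const_mul a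
    simpa using this
  have h1 : HasDerivAt (fun y : ℝ => (a * (y + 1) ^ 2)⁻¹) (-(a * (2 * (t + 1))) / (a * (t + 1) ^ 2) ^ 2) t :=
    h0.fun_inv (by simp [ha, pow_ne_zero, h])
  have e : (fun y : ℝ => 1 / (a * (y + 1) ^ 2)) = fun y : ℝ => (a * (y + 1) ^ 2)⁻¹ := by
    funext y; rw [one_div]
  rw [e]
  convert h1 using 1
  field_simp

lemma hasDerivAt_ft {t : ℝ} (ht : 0 < t) :
    HasDerivAt ft (-(1 / t ^ 2) + 1 / t - 1 / (t + 1)) t := by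
  have ht1 : (0:ℝ) < t + 1 := by linarith
  have h1 : HasDerivAt (fun y : ℝ => 1 / y) (-(1 / t ^ 2)) t := by
    have := hd_inv_lin (a := 1) (b := 0) (t := t) (by simpa using ht.ne')
    simpa using this
  have h2 : HasDerivAt Real.log (1 / t) t := by
    rw [one_div]; exact Real.hasDerivAt_log ht.ne'
  have h3 : HasDerivAt (fun y : ℝ => Real.log (y + 1)) (1 / (t + 1)) t := by
    have e : (fun y : ℝ => Real.log (y + 1)) = Real.log ∘ fun y : ℝ => y + 1 := rfl
    rw [e]
    have := (Real.hasDerivAt_log ht1.ne').comp t ((hasDerivAt_id t).add_const 1)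
    simpa [one_div] using this
  exact (h1.add h2).sub h3

lemma hasDerivAt_tA {t : ℝ} (ht : 0 < t) :
    HasDerivAt tA (-(2 / (2 * t + 0) ^ 2) - -(2 / (2 * t + 2) ^ 2)) t := by
  have h1 := hd_inv_lin (a := 2) (b := 0) (t := t) (by positivity)
  have h2 := hd_inv_lin (a := 2) (b := 2) (t := t) (by positivity)
  have e : tA = fun y : ℝ => 1 / (2 * y + 0) - 1 / (2 * y + 2) := by
    funext y
    simp only [tA]
    rw [show (2 * y + 0 : ℝ) = 2 * y by ring, show (2 * y + 2 : ℝ) = 2 * (y + 1) by ring]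
  rw [e]
  exact h1.sub h2

lemma hasDerivAt_tB {t : ℝ} (ht : 0 < t) :
    HasDerivAt tB ((-(2 / (2 * t + 0) ^ 2) - -(2 / (2 * t + 2) ^ 2)) +
      (-(2 / (12 * t ^ 3)) - -(2 / (12 * (t + 1) ^ 3)))) t := by
  have h1 := hasDerivAt_tA ht
  have h2 := hd_inv_quad (a := 12) (t := t) (by norm_num) ht.ne'
  have h3 := hd_inv_quad' (a := 12) (t := t) (by norm_num) (by positivity)
  have e : tB = fun y : ℝ => tA y + (1 / (12 * y ^ 2) - 1 / (12 * (y + 1) ^ 2)) := by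
    funext y; simp [tB, tA]
  rw [e]
  exact h1.add (h2.sub h3)


lemma inv_comp_tendsto {g : ℝ → ℝ} (hg : Tendsto g atTop atTop) :
    Tendsto (fun t => 1 / g t) atTop (𝓝 0) := by
  simpa [one_div, Function.comp_def] using tendsto_inv_atTop_zero.comp hg

lemma tendsto_ft : Tendsto ft atTop (𝓝 0) := by
  have h1 : Tendsto (fun t : ℝ => 1 / t) atTop (𝓝 0) := inv_comp_tendsto tendsto_id
  have h2 : Tendsto (fun t : ℝ => Real.log (1 + 1 / t)) atTop (𝓝 0) := by
    have hb : Tendsto (fun t : ℝ => 1 + 1 / t) atTop (𝓝 1) := by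
      simpa using tendsto_const_nhds.add h1
    have := (hb.log one_ne_zero)
    simpa using this
  have h3 : Tendsto (fun t : ℝ => 1 / t - Real.log (1 + 1 / t)) atTop (𝓝 0) := by
    simpa using h1.sub h2
  refine h3.congr' ?_
  filter_upwards [eventually_gt_atTop (0:ℝ)] with t ht
  have : (1 : ℝ) + 1 / t = (t + 1) / t := by field_simp
  rw [this, Real.log_div (by linarith) ht.ne', ft]
  ring

lemma tendsto_tA : Tendsto tA atTop (𝓝 0) := by
  have h1 : Tendsto (fun t : ℝ => 1 / (2 * t)) atTop (𝓝 0) :=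
    inv_comp_tendsto (tendsto_id.const_mul_atTop two_pos)
  have h2 : Tendsto (fun t : ℝ => 1 / (2 * (t + 1))) atTop (𝓝 0) :=
    inv_comp_tendsto ((tendsto_atTop_add_const_right _ 1 tendsto_id).const_mul_atTop two_pos)
  have h0 : Tendsto (fun t : ℝ => 1 / (2 * t) - 1 / (2 * (t + 1))) atTop (𝓝 0) := by
    simpa using h1.sub h2
  exact h0.congr fun t => by rw [tA]

lemma tendsto_tB : Tendsto tB atTop (𝓝 0) := by
  have hp : Tendsto (fun t : ℝ => t ^ 2) atTop atTop := tendsto_pow_atTop two_ne_zero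
  have h1 : Tendsto (fun t : ℝ => 1 / (12 * t ^ 2)) atTop (𝓝 0) :=
    inv_comp_tendsto (hp.const_mul_atTop (by norm_num))
  have h2 : Tendsto (fun t : ℝ => 1 / (12 * (t + 1) ^ 2)) atTop (𝓝 0) := by
    refine inv_comp_tendsto (Tendsto.const_mul_atTop (by norm_num) ?_)
    exact hp.comp (tendsto_atTop_add_const_right _ 1 tendsto_id)
  have h0 : Tendsto (fun t : ℝ => tA t + (1 / (12 * t ^ 2) - 1 / (12 * (t + 1) ^ 2)))
      atTop (𝓝 0) := by
    simpa using tendsto_tA.add (h1.sub h2)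
  exact h0.congr fun t => by rw [tB, tA]

lemma pos_of_antitone {φ d : ℝ → ℝ} (hder : ∀ t : ℝ, 0 < t → HasDerivAt φ (d t) t)
    (hneg : ∀ t : ℝ, 0 < t → d t < 0) (hlim : Tendsto φ atTop (𝓝 0)) :
    ∀ t : ℝ, 0 < t → 0 < φ t := by
  have hanti : StrictAntiOn φ (Set.Ioi 0) := by
    refine strictAntiOn_of_deriv_neg (convex_Ioi 0) ?_ ?_
    · intro t ht
      exact (hder t ht).differentiableAt.continuousAt.continuousWithinAt
    · intro t ht
      rw [interior_Ioi] at ht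
      rw [(hder t ht).deriv]
      exact hneg t ht
  intro t ht
  have h1 : φ (t + 1) < φ t := hanti (Set.mem_Ioi.2 ht) (Set.mem_Ioi.2 (by linarith)) (by linarith)
  have h2 : 0 ≤ φ (t + 1) := by
    refine le_of_tendsto hlim ?_
    filter_upwards [eventually_gt_atTop (t + 1)] with r hr
    exact (hanti (Set.mem_Ioi.2 (by linarith)) (Set.mem_Ioi.2 (by linarith)) hr).le
  linarith

lemma keyA {t : ℝ} (ht : 0 < t) : tA t < ft t := by
  have := pos_of_antitone (φ := fun t => ft t - tA t)
    (d := fun t => (-(1 / t ^ 2) + 1 / t - 1 / (t + 1)) -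
      (-(2 / (2 * t + 0) ^ 2) - -(2 / (2 * t + 2) ^ 2)))
    (fun t ht => (hasDerivAt_ft ht).sub (hasDerivAt_tA ht))
    (fun t ht => by
      have ht1 : (0:ℝ) < t + 1 := by linarith
      have he : (-(1 / t ^ 2) + 1 / t - 1 / (t + 1)) -
          (-(2 / (2 * t + 0) ^ 2) - -(2 / (2 * t + 2) ^ 2)) =
          -(1 / (2 * t ^ 2 * (t + 1) ^ 2)) := by
        field_simp
        ring
      simp only [he, neg_lt_zero]
      positivity)
    (by simpa using tendsto_ft.sub tendsto_tA) t ht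
  exact sub_pos.mp this

lemma keyB {t : ℝ} (ht : 0 < t) : ft t < tB t := by
  have := pos_of_antitone (φ := fun t => tB t - ft t)
    (d := fun t => ((-(2 / (2 * t + 0) ^ 2) - -(2 / (2 * t + 2) ^ 2)) +
      (-(2 / (12 * t ^ 3)) - -(2 / (12 * (t + 1) ^ 3)))) -
      (-(1 / t ^ 2) + 1 / t - 1 / (t + 1)))
    (fun t ht => (hasDerivAt_tB ht).sub (hasDerivAt_ft ht))
    (fun t ht => by
      have ht1 : (0:ℝ) < t + 1 := by linarith
      have he : ((-(2 / (2 * t + 0) ^ 2) - -(2 / (2 * t + 2) ^ 2)) +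
          (-(2 / (12 * t ^ 3)) - -(2 / (12 * (t + 1) ^ 3)))) -
          (-(1 / t ^ 2) + 1 / t - 1 / (t + 1)) =
          -(1 / (6 * t ^ 3 * (t + 1) ^ 3)) := by
        field_simp
        ring
      simp only [he, neg_lt_zero]
      positivity)
    (by simpa using tendsto_tB.sub tendsto_ft) t ht
  exact sub_pos.mp this

lemma tA_pos {t : ℝ} (ht : 0 < t) : 0 < tA t := by
  have h : tA t = 1 / (2 * t * (t + 1)) := by
    rw [tA]; field_simp; ring
  rw [h]; positivity

lemma ft_pos {t : ℝ} (ht : 0 < t) : 0 < ft t := (tA_pos ht).trans (keyA ht)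


lemma telescope_hasSum {h : ℕ → ℝ} (hmono : ∀ n, h (n + 1) ≤ h n)
    (h0 : Tendsto h atTop (𝓝 0)) : HasSum (fun n => h n - h (n + 1)) (h 0) := by
  rw [hasSum_iff_tendsto_nat_of_nonneg (fun n => sub_nonneg.2 (hmono n))]
  have he : ∀ n : ℕ, ∑ i ∈ Finset.range n, (h i - h (i + 1)) = h 0 - h n :=
    fun n => Finset.sum_range_sub' h n
  have : Tendsto (fun n : ℕ => h 0 - h n) atTop (𝓝 (h 0)) := by
    simpa using tendsto_const_nhds.sub h0
  exact this.congr fun n => (he n).symm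

lemma xn_pos' {x : ℝ} (hx : 0 < x) (n : ℕ) : 0 < x + (n:ℝ) :=
  add_pos_of_pos_of_nonneg hx (Nat.cast_nonneg n)

lemma inv_comp_tendsto_nat {g : ℕ → ℝ} (hg : Tendsto g atTop atTop) :
    Tendsto (fun n => 1 / g n) atTop (𝓝 0) := by
  have := tendsto_inv_atTop_zero.comp hg
  exact this.congr fun n => (one_div _).symm

lemma nat_tendsto_aux (x : ℝ) : Tendsto (fun n : ℕ => x + (n : ℝ)) atTop atTop :=
  tendsto_atTop_add_const_left _ x tendsto_natCast_atTop_atTop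

lemma hasSum_tA {x : ℝ} (hx : 0 < x) :
    HasSum (fun n : ℕ => tA (x + n)) (1 / (2 * x)) := by
  have key := telescope_hasSum (h := fun n : ℕ => 1 / (2 * (x + n)))
    (fun n => by
      have h1 := xn_pos' hx n
      exact one_div_le_one_div_of_le (by linarith) (by push_cast; linarith))
    (inv_comp_tendsto_nat ((nat_tendsto_aux x).const_mul_atTop (two_pos (α := ℝ))))
  have e : (fun n : ℕ => tA (x + n)) = fun n : ℕ => 1 / (2 * (x + n)) - 1 / (2 * (x + (n + 1 : ℕ))) := by
    funext n; rw [tA]; push_cast; ring_nf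
  rw [e]
  simpa using key

lemma hasSum_tB {x : ℝ} (hx : 0 < x) :
    HasSum (fun n : ℕ => tB (x + n)) (1 / (2 * x) + 1 / (12 * x ^ 2)) := by
  have key := telescope_hasSum (h := fun n : ℕ => 1 / (2 * (x + n)) + 1 / (12 * (x + n) ^ 2))
    (fun n => by
      have h1 := xn_pos' hx n
      have ha : (1:ℝ) / (2 * (x + ((n+1:ℕ):ℝ))) ≤ 1 / (2 * (x + (n:ℝ))) :=
        one_div_le_one_div_of_le (by linarith) (by push_cast; linarith)
      have hb : (1:ℝ) / (12 * (x + ((n+1:ℕ):ℝ)) ^ 2) ≤ 1 / (12 * (x + (n:ℝ)) ^ 2) :=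
        one_div_le_one_div_of_le (by positivity) (by push_cast; nlinarith)
      exact add_le_add ha hb)
    (by
      have h1 : Tendsto (fun n : ℕ => 1 / (2 * (x + (n:ℝ)))) atTop (𝓝 0) :=
        inv_comp_tendsto_nat ((nat_tendsto_aux x).const_mul_atTop (two_pos (α := ℝ)))
      have hsq : Tendsto (fun n : ℕ => (x + (n:ℝ)) ^ 2) atTop atTop :=
        (tendsto_pow_atTop two_ne_zero).comp (nat_tendsto_aux x)
      have h2 : Tendsto (fun n : ℕ => 1 / (12 * (x + (n:ℝ)) ^ 2)) atTop (𝓝 0) :=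
        inv_comp_tendsto_nat (hsq.const_mul_atTop (by norm_num))
      simpa using h1.add h2)
  have e : (fun n : ℕ => tB (x + n)) = fun n : ℕ =>
      (1 / (2 * (x + n)) + 1 / (12 * (x + n) ^ 2)) -
      (1 / (2 * (x + (n + 1 : ℕ))) + 1 / (12 * (x + (n + 1 : ℕ)) ^ 2)) := by
    funext n; rw [tB]; push_cast; ring_nf
  rw [e]
  simpa using key

lemma xn_pos {x : ℝ} (hx : 0 < x) (n : ℕ) : 0 < x + (n:ℝ) :=
  add_pos_of_pos_of_nonneg hx (Nat.cast_nonneg n)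

lemma summable_ft {x : ℝ} (hx : 0 < x) : Summable (fun n : ℕ => ft (x + n)) :=
  Summable.of_nonneg_of_le (fun n => (ft_pos (xn_pos hx n)).le)
    (fun n => (keyB (xn_pos hx n)).le) (hasSum_tB hx).summable

noncomputable def P (x : ℝ) : ℝ := ∑' n : ℕ, ft (x + n)

lemma P_lb {x : ℝ} (hx : 0 < x) : 1 / (2 * x) < P x := by
  rw [← (hasSum_tA hx).tsum_eq]
  exact Summable.tsum_lt_tsum_of_nonneg (i := 0) (fun n => (tA_pos (xn_pos hx n)).le)
    (fun n => (keyA (xn_pos hx n)).le) (by simpa using keyA (xn_pos hx 0)) (summable_ft hx)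

lemma P_ub {x : ℝ} (hx : 0 < x) : P x < 1 / (2 * x) + 1 / (12 * x ^ 2) := by
  rw [← (hasSum_tB hx).tsum_eq]
  exact Summable.tsum_lt_tsum_of_nonneg (i := 0) (fun n => (ft_pos (xn_pos hx n)).le)
    (fun n => (keyB (xn_pos hx n)).le) (by simpa using keyB (xn_pos hx 0)) (hasSum_tB hx).summable

lemma P_nonneg {x : ℝ} (hx : 0 < x) : 0 ≤ P x :=
  tsum_nonneg fun n => (ft_pos (xn_pos hx n)).le

lemma P_split {x : ℝ} (hx : 0 < x) (n : ℕ) :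
    P x = (∑ k ∈ Finset.range n, ft (x + k)) + P (x + n) := by
  have := (Summable.sum_add_tsum_nat_add (f := fun k : ℕ => ft (x + k)) n (summable_ft hx)).symm
  rw [P, this]
  congr 1
  rw [P]
  exact tsum_congr fun i => by congr 1; push_cast; ring

lemma sum_ft_eq (x : ℝ) (n : ℕ) :
    ∑ k ∈ Finset.range n, ft (x + k) =
      (∑ k ∈ Finset.range n, 1 / (x + k)) + Real.log x - Real.log (x + n) := by
  have h : ∀ k ∈ Finset.range n, ft (x + k) =
      1 / (x + k) + ((fun j : ℕ => Real.log (x + j)) k - (fun j : ℕ => Real.log (x + j)) (k + 1)) := by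
    intro k _
    rw [ft]
    push_cast
    ring_nf
  rw [Finset.sum_congr rfl h, Finset.sum_add_distrib,
    Finset.sum_range_sub' (fun j : ℕ => Real.log (x + j)) n]
  push_cast
  simp only [one_div]
  ring


noncomputable def Fn (n : ℕ) (x : ℝ) : ℝ :=
  x * Real.log n + Real.log (n.factorial : ℝ) - ∑ k ∈ Finset.range (n + 1), Real.log (x + k)

noncomputable def Fn' (n : ℕ) (x : ℝ) : ℝ :=
  Real.log n - ∑ k ∈ Finset.range (n + 1), 1 / (x + k)

lemma hasDerivAt_Fn (n : ℕ) {x : ℝ} (hx : 0 < x) : HasDerivAt (Fn n) (Fn' n x) x := by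
  have h1 : HasDerivAt (fun y : ℝ => y * Real.log n + Real.log (n.factorial : ℝ)) (Real.log n) x := by
    simpa using ((hasDerivAt_id x).mul_const (Real.log (n : ℝ))).add_const (Real.log (n.factorial : ℝ))
  have h2 : HasDerivAt (fun y : ℝ => ∑ k ∈ Finset.range (n + 1), Real.log (y + k))
      (∑ k ∈ Finset.range (n + 1), 1 / (x + k)) x := by
    apply HasDerivAt.fun_sum
    intro k _
    have hkpos := xn_pos hx k
    have := (Real.hasDerivAt_log hkpos.ne').comp x ((hasDerivAt_id x).add_const (k : ℝ))
    simp only [one_div]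
    simp at this
    exact this
  exact h1.sub h2

lemma Fn_tendsto {x : ℝ} (hx : 0 < x) :
    Tendsto (fun n => Fn n x) atTop (𝓝 (Real.log (Real.Gamma x))) := by
  have h := (Real.GammaSeq_tendsto_Gamma x).log (Real.Gamma_pos_of_pos hx).ne'
  refine h.congr' ?_
  filter_upwards [eventually_ge_atTop 1] with n hn
  have hn0 : (0:ℝ) < n := by exact_mod_cast hn
  have hfac : (0:ℝ) < (n.factorial : ℝ) := by exact_mod_cast Nat.factorial_pos n
  have hrp : (0:ℝ) < (n:ℝ) ^ x := Real.rpow_pos_of_pos hn0 x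
  have hprod : 0 < ∏ j ∈ Finset.range (n + 1), (x + j) :=
    Finset.prod_pos fun j _ => xn_pos hx j
  rw [Real.GammaSeq, Real.log_div (by positivity) hprod.ne',
    Real.log_mul hrp.ne' hfac.ne', Real.log_rpow hn0,
    Real.log_prod (fun j _ => (xn_pos hx j).ne'), Fn]

lemma est {x : ℝ} (hx : 0 < x) {n : ℕ} (hn : 1 ≤ n) :
    |Real.log x - P x - Fn' n x| ≤ (x + 2) / n := by
  have hn0 : (0:ℝ) < n := by exact_mod_cast hn
  have hn1 : (1:ℝ) ≤ n := by exact_mod_cast hn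
  have hxn : (0:ℝ) < x + n := by linarith
  have h1 : Fn' n x = Real.log n - ((∑ k ∈ Finset.range n, 1 / (x + k)) + 1 / (x + n)) := by
    rw [Fn', Finset.sum_range_succ]
  have key : Real.log x - P x - Fn' n x =
      (Real.log (x + n) - Real.log n) + 1 / (x + n) - P (x + n) := by
    rw [h1, P_split hx n, sum_ft_eq x n]; ring
  rw [key]
  have hP0 : 0 ≤ P (x + n) := P_nonneg hxn
  have hPu : P (x + n) ≤ 1 / (2 * (x + n)) + 1 / (12 * (x + n) ^ 2) := (P_ub hxn).le
  have hPu2 : P (x + n) ≤ 1 / n := by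
    have e1 : 1 / (2 * (x + n)) ≤ 1 / (2 * n) :=
      one_div_le_one_div_of_le (by linarith) (by linarith)
    have e2 : 1 / (12 * (x + n) ^ 2) ≤ 1 / (2 * n) := by
      apply one_div_le_one_div_of_le (by linarith)
      nlinarith
    have e3 : 1 / (2 * n) + 1 / (2 * n) = 1 / (n : ℝ) := by
      field_simp
      norm_num
    linarith
  have hlog0 : 0 ≤ Real.log (x + n) - Real.log n :=
    sub_nonneg.2 (Real.log_le_log hn0 (by linarith))
  have hlog1 : Real.log (x + n) - Real.log n ≤ x / n := by
    have := Real.log_le_sub_one_of_pos (show (0:ℝ) < (x + n) / n by positivity)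
    rw [Real.log_div hxn.ne' hn0.ne'] at this
    have e : (x + n) / n - 1 = x / n := by field_simp; ring
    linarith
  have hinv0 : 0 < 1 / (x + n) := by positivity
  have hinv1 : 1 / (x + n) ≤ 1 / n := one_div_le_one_div_of_le hn0 (by linarith)
  have e2 : (x + 2) / n = x / n + 1 / n + 1 / n := by ring
  rw [abs_le]
  constructor
  · rw [e2]
    have : 0 ≤ x / n := by positivity
    linarith
  · rw [e2]; linarith

lemma tlu : TendstoLocallyUniformlyOn (fun (n : ℕ) (x : ℝ) => Fn' n x)
    (fun x => Real.log x - P x) atTop (Set.Ioi 0) := by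
  rw [Metric.tendstoLocallyUniformlyOn_iff]
  intro eps heps x0 hx0
  rw [Set.mem_Ioi] at hx0
  refine ⟨Set.Ioo 0 (x0 + 1), mem_nhdsWithin_of_mem_nhds (Ioo_mem_nhds hx0 (by linarith)), ?_⟩
  obtain ⟨N, hN⟩ := exists_nat_gt ((x0 + 3) / eps)
  filter_upwards [eventually_ge_atTop (N + 1)] with n hn y hy
  obtain ⟨hy0, hy1⟩ := hy
  have hn1 : 1 ≤ n := le_trans (Nat.le_add_left 1 N) hn
  have hnR : ((N:ℝ) + 1) ≤ n := by exact_mod_cast hn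
  have hnpos : (0:ℝ) < n := Nat.cast_pos.mpr hn1
  have h1 := est hy0 hn1
  rw [Real.dist_eq]
  have h2 : (y + 2) / n ≤ (x0 + 3) / n :=
    (div_le_div_iff_of_pos_right hnpos).mpr (by linarith)
  have h3 : (x0 + 3) / n < eps := by
    rw [div_lt_iff₀ hnpos]
    have hx03 : (0:ℝ) < x0 + 3 := by linarith
    rw [div_lt_iff₀ heps] at hN
    nlinarith
  calc |Real.log y - P y - Fn' n y| ≤ (y + 2) / n := h1
    _ ≤ (x0 + 3) / n := h2
    _ < eps := h3

lemma deriv_Gamma_eq {x : ℝ} (hx : 0 < x) :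
    deriv Real.Gamma x / Real.Gamma x = Real.log x - P x := by
  have hdiff : DifferentiableAt ℝ Real.Gamma x :=
    Real.differentiableAt_Gamma fun m =>
      ((neg_nonpos.mpr (Nat.cast_nonneg m)).trans_lt hx).ne'
  have hpos := Real.Gamma_pos_of_pos hx
  have hG1 : HasDerivAt (fun y => Real.log (Real.Gamma y))
      (deriv Real.Gamma x / Real.Gamma x) x := hdiff.hasDerivAt.log hpos.ne'
  have hG2 : HasDerivAt (fun y => Real.log (Real.Gamma y)) (Real.log x - P x) x := by
    apply hasDerivAt_of_tendstoLocallyUniformlyOn isOpen_Ioi tlu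
      (Filter.Eventually.of_forall fun n y hy => hasDerivAt_Fn n (Set.mem_Ioi.1 hy))
      (fun y hy => Fn_tendsto (Set.mem_Ioi.1 hy)) (Set.mem_Ioi.2 hx)
  exact hG1.unique hG2


lemma deriv_Gamma_add_one {x : ℝ} (hx : 0 < x) :
    deriv Real.Gamma (x + 1) = Real.Gamma x + x * deriv Real.Gamma x := by
  have hdiff : ∀ {y : ℝ}, 0 < y → DifferentiableAt ℝ Real.Gamma y := fun {y} hy =>
    Real.differentiableAt_Gamma fun m => ((neg_nonpos.mpr (Nat.cast_nonneg m)).trans_lt hy).ne'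
  have h1 : HasDerivAt (fun y : ℝ => Real.Gamma (y + 1)) (deriv Real.Gamma (x + 1)) x := by
    have := ((hdiff (by linarith : (0:ℝ) < x + 1)).hasDerivAt).comp x
      ((hasDerivAt_id x).add_const 1)
    simp at this
    exact this
  have h2 : HasDerivAt (fun y : ℝ => y * Real.Gamma y)
      (Real.Gamma x + x * deriv Real.Gamma x) x := by
    have := (hasDerivAt_id x).fun_mul (hdiff hx).hasDerivAt
    simpa [add_comm] using this
  have heq : (fun y : ℝ => y * Real.Gamma y) =ᶠ[𝓝 x] fun y : ℝ => Real.Gamma (y + 1) := by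
    filter_upwards [eventually_ne_nhds hx.ne'] with y hy
    exact (Real.Gamma_add_one hy).symm
  have h3 : HasDerivAt (fun y : ℝ => y * Real.Gamma y) (deriv Real.Gamma (x + 1)) x :=
    h1.congr_of_eventuallyEq heq
  exact (h3.unique h2)

lemma psi_rec {x : ℝ} (hx : 0 < x) :
    deriv Real.Gamma (x + 1) / Real.Gamma (x + 1) =
      deriv Real.Gamma x / Real.Gamma x + 1 / x := by
  rw [Real.Gamma_add_one hx.ne', deriv_Gamma_add_one hx]
  have hG := (Real.Gamma_pos_of_pos hx).ne'
  field_simp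
  ring

end ThetaAux

theorem theta_diff_tendsto_zero :
    Tendsto (fun x : ℝ => ((x + 1) * (Real.log (x + 1) - digamma (x + 1)) -
      x * (Real.log x - digamma x))) atTop (nhds 0) ∧
    ∀ x : ℝ, 0 < x →
      (x + 1) * Real.log (1 + 1 / x) - 1 / (2 * x) - 1 <
        (x + 1) * (Real.log (x + 1) - digamma (x + 1)) - x * (Real.log x - digamma x) ∧
      (x + 1) * (Real.log (x + 1) - digamma (x + 1)) - x * (Real.log x - digamma x) <
        (x + 1) * Real.log (1 + 1 / x) - 1 / (2 * x) + 1 / (12 * x ^ 2) - 1 := by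
  have hbounds : ∀ x : ℝ, 0 < x →
      (x + 1) * Real.log (1 + 1 / x) - 1 / (2 * x) - 1 <
        (x + 1) * (Real.log (x + 1) - digamma (x + 1)) - x * (Real.log x - digamma x) ∧
      (x + 1) * (Real.log (x + 1) - digamma (x + 1)) - x * (Real.log x - digamma x) <
        (x + 1) * Real.log (1 + 1 / x) - 1 / (2 * x) + 1 / (12 * x ^ 2) - 1 := by
    intro x hx
    have hlog : Real.log (x + 1) = Real.log x + Real.log (1 + 1 / x) := by
      rw [show (1:ℝ) + 1 / x = (x + 1) / x by field_simp,
        Real.log_div (by linarith) hx.ne']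
      ring
    have hrec : digamma (x + 1) = digamma x + 1 / x := by
      simp only [digamma]
      exact ThetaAux.psi_rec hx
    have hPid : Real.log x - digamma x = ThetaAux.P x := by
      simp only [digamma]
      rw [ThetaAux.deriv_Gamma_eq hx]
      ring
    have hP1 : 1 / (2 * x) < Real.log x - digamma x := by
      rw [hPid]; exact ThetaAux.P_lb hx
    have hP2 : Real.log x - digamma x < 1 / (2 * x) + 1 / (12 * x ^ 2) := by
      rw [hPid]; exact ThetaAux.P_ub hx
    have hD : (x + 1) * (Real.log (x + 1) - digamma (x + 1)) -
        x * (Real.log x - digamma x) =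
        (x + 1) * Real.log (1 + 1 / x) - 1 - 1 / x + (Real.log x - digamma x) := by
      rw [hrec, hlog]
      field_simp
      ring
    have hhalf : (1:ℝ) / (2 * x) + 1 / (2 * x) = 1 / x := by
      field_simp
      norm_num
    constructor
    · rw [hD]; linarith
    · rw [hD]; linarith
  refine ⟨?_, hbounds⟩
  have h2 : Tendsto (fun x : ℝ => Real.log (1 + 1 / x)) atTop (𝓝 0) := by
    have hb : Tendsto (fun x : ℝ => 1 + 1 / x) atTop (𝓝 1) := by
      simpa using tendsto_const_nhds.add (ThetaAux.inv_comp_tendsto tendsto_id)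
    simpa using hb.log one_ne_zero
  have h1 : Tendsto (fun x : ℝ => x * Real.log (1 + 1 / x)) atTop (𝓝 1) := by
    simpa using Real.tendsto_mul_log_one_add_div_atTop 1
  have h3 : Tendsto (fun x : ℝ => 1 / (2 * x)) atTop (𝓝 0) :=
    ThetaAux.inv_comp_tendsto (tendsto_id.const_mul_atTop two_pos)
  have h4 : Tendsto (fun x : ℝ => 1 / (12 * x ^ 2)) atTop (𝓝 0) :=
    ThetaAux.inv_comp_tendsto ((tendsto_pow_atTop two_ne_zero).const_mul_atTop (by norm_num))
  have hL : Tendsto (fun x : ℝ => (x + 1) * Real.log (1 + 1 / x) - 1 / (2 * x) - 1)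
      atTop (𝓝 0) := by
    have := (((h1.add h2).sub h3).sub (tendsto_const_nhds (x := (1:ℝ))))
    have he : (fun x : ℝ => (x * Real.log (1 + 1 / x) + Real.log (1 + 1 / x)) - 1 / (2 * x) - 1)
        = fun x : ℝ => (x + 1) * Real.log (1 + 1 / x) - 1 / (2 * x) - 1 := by
      funext x; ring
    rw [he] at this
    simpa using this
  have hU : Tendsto (fun x : ℝ =>
      (x + 1) * Real.log (1 + 1 / x) - 1 / (2 * x) + 1 / (12 * x ^ 2) - 1) atTop (𝓝 0) := by
    have := hL.add h4
    have he : (fun x : ℝ => ((x + 1) * Real.log (1 + 1 / x) - 1 / (2 * x) - 1) + 1 / (12 * x ^ 2))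
        = fun x : ℝ => (x + 1) * Real.log (1 + 1 / x) - 1 / (2 * x) + 1 / (12 * x ^ 2) - 1 := by
      funext x; ring
    rw [he] at this
    simpa using this
  refine tendsto_of_tendsto_of_tendsto_of_le_of_le' hL hU ?_ ?_
  · filter_upwards [eventually_gt_atTop (0:ℝ)] with x hx
    exact (hbounds x hx).1.le
  · filter_upwards [eventually_gt_atTop (0:ℝ)] with x hx
    exact (hbounds x hx).2.le
end
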